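/- arXiv:0908.3628 — 2 statements merged into one kernel-verified Lean document; each statement's English description precedes it below -/
import Mathlib

section
/- If w ∈ W_∞ is increasing up to k and not k-Grassmannian, with last descent r > k and s maximal such that w_s < w_r, then every element of Φ(w) is again increasing up to k. -/
open Equiv

attribute [local instance] Classical.propDecidable

noncomputable section

namespace Giambelli

/-- The simple reflection `s_i` of the (infinite) hyperoctahedral group, realized
inside `Equiv.Perm ℤ`: `s_0` is the sign change of the first entry, and `s_i`
(`i ≥ 1`) swaps the entries in positions `i` and `i+1`. -/
def wS (i : ℕ) : Equiv.Perm ℤ :=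
  if i = 0 then Equiv.swap 1 (-1)
  else Equiv.swap (i : ℤ) ((i : ℤ) + 1) * Equiv.swap (-(i : ℤ)) (-((i : ℤ) + 1))

/-- `f` is a signed permutation: `f(-i) = -f(i)`. -/
def IsOddPerm (f : Equiv.Perm ℤ) : Prop := ∀ i : ℤ, f (-i) = - f i

/-- `f` moves only entries of absolute value at most `n`. -/
def SuppLe (n : ℕ) (f : Equiv.Perm ℤ) : Prop := ∀ i : ℤ, (n : ℤ) < |i| → f i = i

/-- Membership in the hyperoctahedral group `W_n`. -/
def InWn (n : ℕ) (f : Equiv.Perm ℤ) : Prop := IsOddPerm f ∧ SuppLe n f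

/-- Membership in `W_∞ = ∪_n W_n`. -/
def InWinf (f : Equiv.Perm ℤ) : Prop := IsOddPerm f ∧ ∃ n : ℕ, SuppLe n f

/-- The Coxeter length: the least length of a word in the `s_i` representing `f`. -/
def len (f : Equiv.Perm ℤ) : ℕ :=
  sInf {m : ℕ | ∃ l : List ℕ, l.length = m ∧ (l.map wS).prod = f}

/-- `f` has a descent at position `p ≥ 0`, where by convention `w_0 = 0`. -/
def Descent (f : Equiv.Perm ℤ) (p : ℕ) : Prop :=
  f ((p : ℤ) + 1) < (if p = 0 then 0 else f (p : ℤ))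

/-- `f` is increasing up to `k`: it has no descent at any position `< k`. -/
def IncUpTo (k : ℕ) (f : Equiv.Perm ℤ) : Prop := ∀ p : ℕ, p < k → ¬ Descent f p

/-- `f` is `k`-Grassmannian: `ℓ(f s_i) = ℓ(f) + 1` for all `i ≠ k`. -/
def kGrass (k : ℕ) (f : Equiv.Perm ℤ) : Prop :=
  ∀ i : ℕ, i ≠ k → len (f * wS i) = len f + 1

/-- The reflection `t_{ij}`, swapping the entries in positions `i` and `j`. -/
def tt (i j : ℕ) : Equiv.Perm ℤ :=
  Equiv.swap (i : ℤ) (j : ℤ) * Equiv.swap (-(i : ℤ)) (-(j : ℤ))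

/-- The reflection `t̄_{ij}`, swapping and negating the entries in positions `i`,`j`
    (negating the entry in position `i` when `i = j`). -/
def tb (i j : ℕ) : Equiv.Perm ℤ :=
  if i = j then Equiv.swap (i : ℤ) (-(i : ℤ))
  else Equiv.swap (i : ℤ) (-(j : ℤ)) * Equiv.swap (j : ℤ) (-(i : ℤ))

/-- The transition set `Φ(w) = Φ₁(w) ∪ Φ₂(w)` attached to `w` with last descent `r`
and `s` maximal such that `w_s < w_r`. -/
def Phi (w : Equiv.Perm ℤ) (r s : ℕ) : Set (Equiv.Perm ℤ) :=
  {v | ∃ i : ℕ, 1 ≤ i ∧ i < r ∧ len (w * tt r s * tt i r) = len w ∧ v = w * tt r s * tt i r} ∪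
  {v | ∃ i : ℕ, 1 ≤ i ∧ len (w * tt r s * tb i r) = len w ∧ v = w * tt r s * tb i r}

/-- The last descent position of `f`. -/
def lastDescent (f : Equiv.Perm ℤ) : ℕ := sSup {p : ℕ | Descent f p}

/-- `max { i > r | w_i < w_r }`. -/
def maxS (f : Equiv.Perm ℤ) (r : ℕ) : ℕ := sSup {i : ℕ | r < i ∧ f (i : ℤ) < f (r : ℤ)}

/-- A terminal node of the `k`-transition tree: `w = 1` or the last descent of `w` is `k`. -/
def Terminal (k : ℕ) (w : Equiv.Perm ℤ) : Prop := w = 1 ∨ lastDescent w = k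

/-- The edge (parent-to-child) relation of the `k`-transition tree `T^k`. -/
def StepT (k : ℕ) (w v : Equiv.Perm ℤ) : Prop :=
  ¬ Terminal k w ∧ v ∈ Phi w (lastDescent w) (maxS w (lastDescent w))

/-! ### basic lemmas -/


lemma odd_zero {f : Perm ℤ} (hf : IsOddPerm f) : f 0 = 0 := by
  have h := hf 0; simp at h; omega

lemma odd_one : IsOddPerm 1 := fun i => rfl

lemma odd_mul {f g : Perm ℤ} (hf : IsOddPerm f) (hg : IsOddPerm g) : IsOddPerm (f * g) := by
  intro i
  have h1 := hg i
  have h2 := hf (g i)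
  simp only [Perm.mul_apply, h1, h2]

lemma suppLe_one (n : ℕ) : SuppLe n 1 := fun i _ => rfl

lemma suppLe_mono {n m : ℕ} {f : Perm ℤ} (h : n ≤ m) (hf : SuppLe n f) : SuppLe m f := by
  intro i hi
  refine hf i (lt_of_le_of_lt ?_ hi)
  exact_mod_cast h

lemma suppLe_mul {n : ℕ} {f g : Perm ℤ} (hf : SuppLe n f) (hg : SuppLe n g) :
    SuppLe n (f * g) := by
  intro i hi
  simp only [Perm.mul_apply, hg i hi, hf i hi]

lemma suppLe_bound {n : ℕ} {f : Perm ℤ} (hf : SuppLe n f) {x : ℤ} (hx : |x| ≤ n) :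
    |f x| ≤ n := by
  by_contra h
  push_neg at h
  have h2 := hf (f x) h
  have h3 : f x = x := f.injective h2
  rw [h3] at h
  omega

lemma odd_ne_zero {f : Perm ℤ} (hf : IsOddPerm f) {x : ℤ} (hx : x ≠ 0) : f x ≠ 0 := by
  intro h
  have h0 : f 0 = 0 := odd_zero hf
  exact hx (f.injective (h.trans h0.symm))

/-! ### the inversion set and inversion number -/

def Rcond (p : ℤ × ℤ) : Prop := 0 < p.2 ∧ -p.2 ≤ p.1 ∧ p.1 < p.2 ∧ p.1 ≠ 0

def Cset (f : Perm ℤ) : Set (ℤ × ℤ) := {p | Rcond p ∧ f p.2 < f p.1}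

def invB (f : Perm ℤ) : ℕ := (Cset f).ncard

def window (n : ℕ) : Set (ℤ × ℤ) := (Set.Icc (-(n:ℤ)) n) ×ˢ (Set.Icc 1 (n:ℤ))

lemma window_finite (n : ℕ) : (window n).Finite :=
  (Set.finite_Icc _ _).prod (Set.finite_Icc _ _)

lemma flip_subset_window {n : ℕ} {f : Perm ℤ} (hf : SuppLe n f) :
    {p : ℤ × ℤ | Rcond p ∧ f p.2 < f p.1} ⊆ window n := by
  rintro ⟨x, y⟩ ⟨⟨hy, hxy1, hxy2, hx0⟩, hv⟩
  simp only at hy hxy1 hxy2 hx0 hv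
  have hyn : y ≤ (n : ℤ) := by
    by_contra hyn
    push_neg at hyn
    have hfy : f y = y := hf y (by rw [abs_of_pos hy]; omega)
    rcases le_or_gt |x| (n : ℤ) with h | h
    · have hb := suppLe_bound hf h
      rw [abs_le] at hb
      omega
    · have hfx : f x = x := hf x h
      omega
  constructor <;> simp only [Set.mem_Icc] <;> omega

lemma Cset_subset {n : ℕ} {f : Perm ℤ} (hf : SuppLe n f) : Cset f ⊆ window n :=
  flip_subset_window hf

lemma Cset_finite {n : ℕ} {f : Perm ℤ} (hf : SuppLe n f) : (Cset f).Finite :=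
  (window_finite n).subset (Cset_subset hf)

/-- the set of pairs flipped by right multiplication by `π` -/
def Dset (π : Perm ℤ) : Set (ℤ × ℤ) := {p | Rcond p ∧ π p.2 < π p.1}

lemma Dset_finite {n : ℕ} {π : Perm ℤ} (hπ : SuppLe n π) : (Dset π).Finite :=
  (window_finite n).subset (flip_subset_window hπ)

/-! ### the master formula -/

theorem master {u π : Perm ℤ} (hu : IsOddPerm u) (hπo : IsOddPerm π)
    (hπ2 : ∀ x, π (π x) = x) {n : ℕ} (hun : SuppLe n u) (hπn : SuppLe n π) :
    invB (u * π) + 2 * (Cset u ∩ Dset π).ncard = invB u + (Dset π).ncard := by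
  classical
  set Θ : ℤ × ℤ → ℤ × ℤ := fun p =>
    if 0 ≤ π p.1 + π p.2 then
      (if π p.1 < π p.2 then (π p.1, π p.2) else (π p.2, π p.1))
    else
      (if π p.1 < π p.2 then (-π p.2, -π p.1) else (-π p.1, -π p.2)) with hΘdef
  have hπ0 : π 0 = 0 := odd_zero hπo
  have key : ∀ p : ℤ × ℤ, Rcond p →
      Rcond (Θ p) ∧ Θ (Θ p) = p ∧
      ((u (π p.2) < u (π p.1)) ↔ ((u (Θ p).2 < u (Θ p).1) ↔ ¬(π p.2 < π p.1))) ∧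
      ((π (Θ p).2 < π (Θ p).1) ↔ (π p.2 < π p.1)) := by
    rintro ⟨x, y⟩ ⟨hy, hxy1, hxy2, hx0⟩
    simp only at hy hxy1 hxy2 hx0
    have hxyne : π x ≠ π y := fun h => (by omega : x ≠ y) (π.injective h)
    have hz1 : π x ≠ 0 := odd_ne_zero hπo hx0
    have hz2 : π y ≠ 0 := odd_ne_zero hπo (by omega)
    have huv : u (π x) ≠ u (π y) := fun h => hxyne (u.injective h)
    have hsum0 : x + y = 0 → π x + π y = 0 := by
      intro h
      have hx' : x = -y := by omega
      rw [hx', hπo]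
      ring
    have hΘx : ∀ q : ℤ × ℤ, Θ q =
        if 0 ≤ π q.1 + π q.2 then
          (if π q.1 < π q.2 then (π q.1, π q.2) else (π q.2, π q.1))
        else
          (if π q.1 < π q.2 then (-π q.2, -π q.1) else (-π q.1, -π q.2)) := fun q => rfl
    by_cases hsum : 0 ≤ π x + π y <;> by_cases hord : π x < π y
    · have hq : Θ (x, y) = (π x, π y) := by rw [hΘx]; simp [hsum, hord]
      rw [hq]
      have hq2 : Θ (π x, π y) = (x, y) := by
        rw [hΘx]
        simp only [hπ2]
        have c1 : 0 ≤ x + y := by omega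
        simp [c1, hxy2]
      refine ⟨⟨by omega, by omega, hord, hz1⟩, hq2, ?_, ?_⟩
      · simp only
        omega
      · simp only [hπ2]
        omega
    · have hq : Θ (x, y) = (π y, π x) := by rw [hΘx]; simp [hsum, hord]
      rw [hq]
      have hq2 : Θ (π y, π x) = (x, y) := by
        rw [hΘx]
        simp only [hπ2]
        have c1 : 0 ≤ y + x := by omega
        have c2 : ¬ (y < x) := by omega
        simp [c1, c2]
      refine ⟨⟨by omega, by omega, by omega, hz2⟩, hq2, ?_, ?_⟩
      · simp only
        omega
      · simp only [hπ2]
        omega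
    · -- sum < 0, π x < π y
      have hsxy : 0 < x + y := by
        rcases eq_or_lt_of_le hxy1 with h | h
        · exfalso; exact hsum (le_of_eq (hsum0 (by omega)).symm)
        · omega
      have hq : Θ (x, y) = (-π y, -π x) := by rw [hΘx]; simp [hsum, hord]
      rw [hq]
      have hπa : π (-π y) = -y := by rw [hπo, hπ2]
      have hπb : π (-π x) = -x := by rw [hπo, hπ2]
      have hq2 : Θ (-π y, -π x) = (x, y) := by
        rw [hΘx]
        simp only [hπa, hπb]
        have c1 : ¬ (0 ≤ -y + -x) := by omega
        have c2 : -y < -x := by omega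
        simp [c1, c2]
      refine ⟨⟨by omega, by omega, by omega, by omega⟩, hq2, ?_, ?_⟩
      · simp only [hu (π x), hu (π y)]
        omega
      · simp only [hπa, hπb]
        omega
    · -- sum < 0, π y < π x
      have hsxy : 0 < x + y := by
        rcases eq_or_lt_of_le hxy1 with h | h
        · exfalso; exact hsum (le_of_eq (hsum0 (by omega)).symm)
        · omega
      have hq : Θ (x, y) = (-π x, -π y) := by rw [hΘx]; simp [hsum, hord]
      rw [hq]
      have hπa : π (-π y) = -y := by rw [hπo, hπ2]
      have hπb : π (-π x) = -x := by rw [hπo, hπ2]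
      have hq2 : Θ (-π x, -π y) = (x, y) := by
        rw [hΘx]
        simp only [hπa, hπb]
        have c1 : ¬ (0 ≤ -x + -y) := by omega
        have c2 : ¬ (-x < -y) := by omega
        simp [c1, c2]
      refine ⟨⟨by omega, by omega, by omega, by omega⟩, hq2, ?_, ?_⟩
      · simp only [hu (π x), hu (π y)]
        omega
      · simp only [hπa, hπb]
        omega
  -- assemble
  set S1 : Set (ℤ × ℤ) := Cset u \ Dset π with hS1
  set S2 : Set (ℤ × ℤ) := Dset π \ Cset u with hS2
  have hCfin : (Cset u).Finite := Cset_finite hun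
  have hDfin : (Dset π).Finite := Dset_finite hπn
  have hS1fin : S1.Finite := hCfin.subset Set.diff_subset
  have hS2fin : S2.Finite := hDfin.subset Set.diff_subset
  have himg : Cset (u * π) = Θ '' (S1 ∪ S2) := by
    ext p
    constructor
    · rintro ⟨hR, hv⟩
      obtain ⟨hR', hΘΘ, hcond, hflip⟩ := key p hR
      simp only [Perm.mul_apply] at hv
      refine ⟨Θ p, ?_, hΘΘ⟩
      by_cases hf : π p.2 < π p.1
      · right
        refine ⟨⟨hR', hflip.mpr hf⟩, fun hc => ?_⟩
        have := (hcond.mp hv).mp hc.2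
        exact this hf
      · left
        exact ⟨⟨hR', (hcond.mp hv).mpr hf⟩, fun hc => hf (hflip.mp hc.2)⟩
    · rintro ⟨q, hq, rfl⟩
      have hqR : Rcond q := by
        rcases hq with h | h
        · exact h.1.1
        · exact h.1.1
      obtain ⟨hR', hΘΘ, -, hflip⟩ := key q hqR
      obtain ⟨-, hΘΘ', hcond', hflip'⟩ := key (Θ q) hR'
      rw [hΘΘ] at hcond'
      refine ⟨hR', ?_⟩
      simp only [Perm.mul_apply]
      rcases hq with ⟨hCu, hD⟩ | ⟨hD, hCu⟩
      · refine hcond'.mpr ?_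
        constructor
        · intro _ hfq
          exact hD ⟨hqR, hflip.mp hfq⟩
        · intro _
          exact hCu.2
      · refine hcond'.mpr ?_
        constructor
        · intro hc _
          exact (hCu ⟨hqR, hc⟩).elim
        · intro hnf
          exact (hnf (hflip.mpr hD.2)).elim
  have hinj : Set.InjOn Θ (S1 ∪ S2) := by
    intro p hp q hq hpq
    have hpR : Rcond p := by rcases hp with h | h; exacts [h.1.1, h.1.1]
    have hqR : Rcond q := by rcases hq with h | h; exacts [h.1.1, h.1.1]
    have h1 := (key p hpR).2.1
    have h2 := (key q hqR).2.1
    rw [← h1, ← h2, hpq]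
  have e1 : invB (u * π) = S1.ncard + S2.ncard := by
    rw [invB, himg, Set.ncard_image_of_injOn hinj,
      Set.ncard_union_eq ?_ hS1fin hS2fin]
    rw [Set.disjoint_left]
    rintro p ⟨hpC, hpD⟩ ⟨hpD', hpC'⟩
    exact hpD hpD'
  have e2 : (Cset u ∩ Dset π).ncard + S1.ncard = invB u :=
    Set.ncard_inter_add_ncard_diff_eq_ncard (Cset u) (Dset π) hCfin
  have e3 : (Dset π ∩ Cset u).ncard + S2.ncard = (Dset π).ncard :=
    Set.ncard_inter_add_ncard_diff_eq_ncard (Dset π) (Cset u) hDfin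
  rw [Set.inter_comm] at e3
  omega


/-! ### value lemmas -/


lemma wS0_apply (x : ℤ) : wS 0 x = if x = 1 then -1 else if x = -1 then 1 else x := by
  simp only [wS, reduceIte, swap_apply_def]

lemma wSp_apply (p : ℕ) (hp : 1 ≤ p) (x : ℤ) :
    wS p x = if x = (p : ℤ) then (p : ℤ) + 1 else if x = (p : ℤ) + 1 then (p : ℤ)
      else if x = -(p : ℤ) then -((p : ℤ) + 1) else if x = -((p : ℤ) + 1) then -(p : ℤ) else x := by
  have h1 : (1 : ℤ) ≤ (p : ℤ) := by exact_mod_cast hp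
  have hne : p ≠ 0 := by omega
  simp only [wS, if_neg hne, Perm.mul_apply, swap_apply_def]
  split_ifs <;> omega

lemma tt_apply (a b : ℕ) (ha : 1 ≤ a) (hb : 1 ≤ b) (hab : a ≠ b) (x : ℤ) :
    tt a b x = if x = (a : ℤ) then (b : ℤ) else if x = (b : ℤ) then (a : ℤ)
      else if x = -(a : ℤ) then -(b : ℤ) else if x = -(b : ℤ) then -(a : ℤ) else x := by
  have h1 : (1 : ℤ) ≤ (a : ℤ) := by exact_mod_cast ha
  have h2 : (1 : ℤ) ≤ (b : ℤ) := by exact_mod_cast hb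
  have h3 : (a : ℤ) ≠ (b : ℤ) := by exact_mod_cast hab
  simp only [tt, Perm.mul_apply, swap_apply_def]
  split_ifs <;> omega

lemma tb_apply (a b : ℕ) (ha : 1 ≤ a) (hb : 1 ≤ b) (hab : a ≠ b) (x : ℤ) :
    tb a b x = if x = (a : ℤ) then -(b : ℤ) else if x = -(b : ℤ) then (a : ℤ)
      else if x = (b : ℤ) then -(a : ℤ) else if x = -(a : ℤ) then (b : ℤ) else x := by
  have h1 : (1 : ℤ) ≤ (a : ℤ) := by exact_mod_cast ha
  have h2 : (1 : ℤ) ≤ (b : ℤ) := by exact_mod_cast hb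
  have h3 : (a : ℤ) ≠ (b : ℤ) := by exact_mod_cast hab
  simp only [tb, if_neg hab, Perm.mul_apply, swap_apply_def]
  split_ifs <;> omega

lemma tbaa_apply (a : ℕ) (ha : 1 ≤ a) (x : ℤ) :
    tb a a x = if x = (a : ℤ) then -(a : ℤ) else if x = -(a : ℤ) then (a : ℤ) else x := by
  simp only [tb, reduceIte, swap_apply_def]


/-! ### properties -/


lemma wS_odd (p : ℕ) : IsOddPerm (wS p) := by
  intro x
  rcases Nat.eq_zero_or_pos p with h | h
  · subst h; rw [wS0_apply, wS0_apply]; split_ifs at * <;> omega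
  · rw [wSp_apply p h, wSp_apply p h]; split_ifs at * <;> omega

lemma wS_invol (p : ℕ) : ∀ x, wS p (wS p x) = x := by
  intro x
  rcases Nat.eq_zero_or_pos p with h | h
  · subst h; rw [wS0_apply, wS0_apply]; split_ifs at * <;> omega
  · have h1 : (1 : ℤ) ≤ (p : ℤ) := by exact_mod_cast h
    rw [wSp_apply p h, wSp_apply p h]; split_ifs at * <;> omega

lemma wS_mul_self (p : ℕ) : wS p * wS p = 1 := by
  ext x; exact wS_invol p x

lemma wS_supp (p : ℕ) : SuppLe (p + 1) (wS p) := by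
  intro x hx
  rw [lt_abs] at hx
  rcases Nat.eq_zero_or_pos p with h | h
  · subst h; rw [wS0_apply]; push_cast at hx; split_ifs at * <;> omega
  · rw [wSp_apply p h]; push_cast at hx; split_ifs at * <;> omega

lemma tt_odd (a b : ℕ) (ha : 1 ≤ a) (hb : 1 ≤ b) (hab : a ≠ b) : IsOddPerm (tt a b) := by
  intro x
  rw [tt_apply a b ha hb hab, tt_apply a b ha hb hab]
  have h1 : (1 : ℤ) ≤ (a : ℤ) := by exact_mod_cast ha
  have h2 : (1 : ℤ) ≤ (b : ℤ) := by exact_mod_cast hb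
  have h3 : (a : ℤ) ≠ (b : ℤ) := by exact_mod_cast hab
  split_ifs at * <;> omega

lemma tt_invol (a b : ℕ) (ha : 1 ≤ a) (hb : 1 ≤ b) (hab : a ≠ b) :
    ∀ x, tt a b (tt a b x) = x := by
  intro x
  rw [tt_apply a b ha hb hab, tt_apply a b ha hb hab]
  have h1 : (1 : ℤ) ≤ (a : ℤ) := by exact_mod_cast ha
  have h2 : (1 : ℤ) ≤ (b : ℤ) := by exact_mod_cast hb
  have h3 : (a : ℤ) ≠ (b : ℤ) := by exact_mod_cast hab
  split_ifs at * <;> omega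

lemma tt_supp (a b : ℕ) (ha : 1 ≤ a) (hb : 1 ≤ b) (hab : a ≠ b) {n : ℕ}
    (han : a ≤ n) (hbn : b ≤ n) : SuppLe n (tt a b) := by
  intro x hx
  rw [lt_abs] at hx
  rw [tt_apply a b ha hb hab]
  have h1 : (a : ℤ) ≤ (n : ℤ) := by exact_mod_cast han
  have h2 : (b : ℤ) ≤ (n : ℤ) := by exact_mod_cast hbn
  have h3 : (1 : ℤ) ≤ (a : ℤ) := by exact_mod_cast ha
  have h4 : (1 : ℤ) ≤ (b : ℤ) := by exact_mod_cast hb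
  split_ifs at * <;> omega

lemma tb_odd (a b : ℕ) (ha : 1 ≤ a) (hb : 1 ≤ b) : IsOddPerm (tb a b) := by
  intro x
  rcases eq_or_ne a b with h | h
  · subst h; rw [tbaa_apply a ha, tbaa_apply a ha]
    have h1 : (1 : ℤ) ≤ (a : ℤ) := by exact_mod_cast ha
    split_ifs at * <;> omega
  · rw [tb_apply a b ha hb h, tb_apply a b ha hb h]
    have h1 : (1 : ℤ) ≤ (a : ℤ) := by exact_mod_cast ha
    have h2 : (1 : ℤ) ≤ (b : ℤ) := by exact_mod_cast hb
    have h3 : (a : ℤ) ≠ (b : ℤ) := by exact_mod_cast h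
    split_ifs at * <;> omega

lemma tb_invol (a b : ℕ) (ha : 1 ≤ a) (hb : 1 ≤ b) : ∀ x, tb a b (tb a b x) = x := by
  intro x
  rcases eq_or_ne a b with h | h
  · subst h; rw [tbaa_apply a ha, tbaa_apply a ha]
    have h1 : (1 : ℤ) ≤ (a : ℤ) := by exact_mod_cast ha
    split_ifs at * <;> omega
  · rw [tb_apply a b ha hb h, tb_apply a b ha hb h]
    have h1 : (1 : ℤ) ≤ (a : ℤ) := by exact_mod_cast ha
    have h2 : (1 : ℤ) ≤ (b : ℤ) := by exact_mod_cast hb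
    have h3 : (a : ℤ) ≠ (b : ℤ) := by exact_mod_cast h
    split_ifs at * <;> omega

lemma tb_supp (a b : ℕ) (ha : 1 ≤ a) (hb : 1 ≤ b) {n : ℕ}
    (han : a ≤ n) (hbn : b ≤ n) : SuppLe n (tb a b) := by
  intro x hx
  rw [lt_abs] at hx
  have h1 : (a : ℤ) ≤ (n : ℤ) := by exact_mod_cast han
  have h2 : (b : ℤ) ≤ (n : ℤ) := by exact_mod_cast hbn
  have h3 : (1 : ℤ) ≤ (a : ℤ) := by exact_mod_cast ha
  have h4 : (1 : ℤ) ≤ (b : ℤ) := by exact_mod_cast hb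
  rcases eq_or_ne a b with h | h
  · subst h; rw [tbaa_apply a ha]; split_ifs at * <;> omega
  · rw [tb_apply a b ha hb h]; split_ifs at * <;> omega

/-! ### bridging the master formula to finite sets -/

lemma master_fin {u π : Perm ℤ} (hu : IsOddPerm u) (hπo : IsOddPerm π)
    (hπ2 : ∀ x, π (π x) = x) {n : ℕ} (hun : SuppLe n u) (hπn : SuppLe n π)
    (D : Finset (ℤ × ℤ)) (hD : Dset π = ↑D) :
    invB (u * π) + 2 * (D.filter fun p => u p.2 < u p.1).card = invB u + D.card := by
  have h := master hu hπo hπ2 hun hπn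
  rw [hD] at h
  have h2 : Cset u ∩ ↑D = ↑(D.filter fun p => u p.2 < u p.1) := by
    ext p
    simp only [Set.mem_inter_iff, Finset.coe_filter, Set.mem_setOf_eq, Cset]
    constructor
    · rintro ⟨⟨hR, hc⟩, hd⟩; exact ⟨hd, hc⟩
    · rintro ⟨hd, hc⟩
      have hR : Rcond p := by
        have : p ∈ Dset π := by rw [hD]; exact_mod_cast hd
        exact this.1
      exact ⟨⟨hR, hc⟩, hd⟩
  rw [h2, Set.ncard_coe_finset, Set.ncard_coe_finset] at h
  exact h

/-! ### the elementary one-step formulas -/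

lemma step0 {u : Perm ℤ} (hu : IsOddPerm u) {n : ℕ} (hun : SuppLe n u) :
    invB (u * wS 0) + 2 * (if u 1 < 0 then 1 else 0) = invB u + 1 := by
  have hπo := wS_odd 0
  have hπ2 := wS_invol 0
  have hπn : SuppLe (n + 1) (wS 0) := suppLe_mono (by omega) (wS_supp 0)
  have hun' : SuppLe (n + 1) u := suppLe_mono (by omega) hun
  have hD : Dset (wS 0) = ↑({((-1 : ℤ), (1 : ℤ))} : Finset (ℤ × ℤ)) := by
    ext ⟨x, y⟩
    simp only [Dset, Set.mem_setOf_eq, Rcond, Finset.coe_singleton,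
      Set.mem_singleton_iff, Prod.mk.injEq]
    rw [wS0_apply, wS0_apply]
    split_ifs at * <;> omega
  have h := master_fin hu hπo hπ2 hun' hπn _ hD
  rw [Finset.filter_singleton] at h
  have hval : (u 1 < u (-1)) ↔ (u 1 < 0) := by rw [hu 1]; omega
  by_cases hc : u 1 < 0
  · rw [if_pos (hval.mpr hc)] at h
    rw [if_pos hc]
    simpa using h
  · rw [if_neg (fun hx => hc (hval.mp hx))] at h
    rw [if_neg hc]
    simpa using h

lemma stepp {u : Perm ℤ} (hu : IsOddPerm u) {n : ℕ} (hun : SuppLe n u) (p : ℕ) (hp : 1 ≤ p) :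
    invB (u * wS p) + 2 * (if u ((p : ℤ) + 1) < u (p : ℤ) then 1 else 0) = invB u + 1 := by
  have hπo := wS_odd p
  have hπ2 := wS_invol p
  have hπn : SuppLe (n + p + 1) (wS p) := suppLe_mono (by omega) (wS_supp p)
  have hun' : SuppLe (n + p + 1) u := suppLe_mono (by omega) hun
  have h1 : (1 : ℤ) ≤ (p : ℤ) := by exact_mod_cast hp
  have hD : Dset (wS p) = ↑({((p : ℤ), (p : ℤ) + 1)} : Finset (ℤ × ℤ)) := by
    ext ⟨x, y⟩
    simp only [Dset, Set.mem_setOf_eq, Rcond, Finset.coe_singleton,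
      Set.mem_singleton_iff, Prod.mk.injEq]
    rw [wSp_apply p hp, wSp_apply p hp]
    split_ifs at * <;> omega
  have h := master_fin hu hπo hπ2 hun' hπn _ hD
  rw [Finset.filter_singleton] at h
  by_cases hc : u ((p : ℤ) + 1) < u (p : ℤ)
  · rw [if_pos hc] at h
    rw [if_pos hc]
    simpa using h
  · rw [if_neg hc] at h
    rw [if_neg hc]
    simpa using h

lemma step {u : Perm ℤ} (hu : InWinf u) (p : ℕ) :
    invB (u * wS p) + 2 * (if Descent u p then 1 else 0) = invB u + 1 := by
  obtain ⟨huo, n, hun⟩ := hu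
  rcases Nat.eq_zero_or_pos p with h | h
  · subst h
    have := step0 huo hun
    have he : Descent u 0 ↔ u 1 < 0 := by
      simp [Descent]
    rw [if_congr he rfl rfl]
    simpa using this
  · have := stepp huo hun p h
    have he : Descent u p ↔ u ((p : ℤ) + 1) < u (p : ℤ) := by
      simp [Descent, Nat.pos_iff_ne_zero.mp h]
    rw [if_congr he rfl rfl]
    exact this

/-! ### length equals inversion number -/

lemma invB_one : invB 1 = 0 := by
  have : Cset 1 = ∅ := by
    ext ⟨x, y⟩
    simp only [Cset, Set.mem_setOf_eq, Rcond, Set.mem_empty_iff_false, iff_false, not_and]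
    intro h
    simp only [Perm.one_apply]
    omega
  rw [invB, this, Set.ncard_empty]

lemma word_invB (l : List ℕ) :
    InWinf ((l.map wS).prod) ∧ invB ((l.map wS).prod) ≤ l.length := by
  induction l using List.reverseRecOn with
  | nil =>
    refine ⟨⟨odd_one, 0, suppLe_one 0⟩, ?_⟩
    simp [invB_one]
  | append_singleton l p ih =>
    obtain ⟨⟨ho, n, hn⟩, hle⟩ := ih
    rw [List.map_append, List.prod_append, List.map_singleton, List.prod_singleton]
    set g := (l.map wS).prod
    have hgW : InWinf g := ⟨ho, n, hn⟩
    have hW : InWinf (g * wS p) := by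
      refine ⟨odd_mul ho (wS_odd p), n + p + 1, suppLe_mul ?_ ?_⟩
      · exact suppLe_mono (by omega) hn
      · exact suppLe_mono (by omega) (wS_supp p)
    refine ⟨hW, ?_⟩
    have hs := step hgW p
    rw [List.length_append, List.length_singleton]
    omega

lemma descent_exists {f : Perm ℤ} (hfo : IsOddPerm f) {n : ℕ} (hfn : SuppLe n f)
    (hne : f ≠ 1) : ∃ p : ℕ, Descent f p := by
  by_contra h
  push_neg at h
  apply hne
  have h0 : 0 < f 1 := by
    have hd := h 0
    simp only [Descent, if_pos rfl] at hd
    push_neg at hd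
    norm_num at hd
    have hnz : f 1 ≠ 0 := odd_ne_zero hfo (by omega)
    omega
  have hmono : ∀ m : ℕ, 1 ≤ m → f (m : ℤ) < f ((m + 1 : ℕ) : ℤ) := by
    intro m hm
    have hd := h m
    simp only [Descent, if_neg (by omega : m ≠ 0)] at hd
    push_neg at hd
    have hcast : ((m : ℤ) + 1) = ((m + 1 : ℕ) : ℤ) := by push_cast; ring
    rw [hcast] at hd
    rcases lt_or_eq_of_le hd with h' | h'
    · exact h'
    · exfalso
      have := f.injective h'
      omega
  have hpos : ∀ m : ℕ, 1 ≤ m → 0 < f m := by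
    intro m
    induction m with
    | zero => omega
    | succ k ih =>
      intro _
      rcases Nat.eq_zero_or_pos k with hk | hk
      · subst hk; simpa using h0
      · have h1 := hmono k hk
        have h2 := ih hk
        omega
  have hge : ∀ m : ℕ, 1 ≤ m → (m : ℤ) ≤ f m := by
    intro m
    induction m with
    | zero => omega
    | succ k ih =>
      intro _
      rcases Nat.eq_zero_or_pos k with hk | hk
      · subst hk
        push_cast
        omega
      · have h1 := hmono k hk
        have h2 := ih hk
        push_cast at h1 h2 ⊢
        omega
  have hub : ∀ d m : ℕ, 1 ≤ m → m + d = n + 1 → f m + d ≤ n + 1 := by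
    intro d
    induction d with
    | zero =>
      intro m hm hmn
      have : f m = m := hfn m (by rw [abs_of_pos (by positivity)]; push_cast; omega)
      push_cast
      omega
    | succ e ih =>
      intro m hm hmn
      have h1 := hmono m hm
      have h2 := ih (m + 1) (by omega) (by omega)
      push_cast at h1 h2 ⊢
      omega
  have heq : ∀ m : ℕ, 1 ≤ m → f m = m := by
    intro m hm
    rcases le_or_gt m n with hmn | hmn
    · have h1 := hge m hm
      have h2 := hub (n + 1 - m) m hm (by omega)
      push_cast at h2
      omega
    · exact hfn m (by rw [abs_of_pos (by positivity)]; push_cast; omega)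
  ext x
  simp only [Perm.one_apply]
  rcases lt_trichotomy x 0 with hx | hx | hx
  · have hodd := hfo (-x)
    simp only [neg_neg] at hodd
    have : f (-x) = -x := by
      have : (-x) = (((-x).toNat : ℕ) : ℤ) := by omega
      rw [this]
      exact heq (-x).toNat (by omega)
    omega
  · subst hx; exact odd_zero hfo
  · have : x = ((x.toNat : ℕ) : ℤ) := by omega
    rw [this]
    exact heq x.toNat (by omega)

lemma exists_word_aux : ∀ N : ℕ, ∀ f : Perm ℤ, InWinf f → invB f ≤ N →
    ∃ l : List ℕ, (l.map wS).prod = f ∧ l.length = invB f := by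
  intro N
  induction N with
  | zero =>
    intro f hf hb
    rcases eq_or_ne f 1 with rfl | hne
    · exact ⟨[], by simp, by simp [invB_one]⟩
    · exfalso
      obtain ⟨hfo, n, hfn⟩ := hf
      obtain ⟨p, hp⟩ := descent_exists hfo hfn hne
      have hs := step ⟨hfo, n, hfn⟩ p
      rw [if_pos hp] at hs
      omega
  | succ N ih =>
    intro f hf hb
    rcases eq_or_ne f 1 with rfl | hne
    · exact ⟨[], by simp, by simp [invB_one]⟩
    · obtain ⟨hfo, n, hfn⟩ := hf
      obtain ⟨p, hp⟩ := descent_exists hfo hfn hne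
      have hs := step ⟨hfo, n, hfn⟩ p
      rw [if_pos hp] at hs
      have hfW : InWinf (f * wS p) := by
        refine ⟨odd_mul hfo (wS_odd p), n + p + 1, suppLe_mul ?_ ?_⟩
        · exact suppLe_mono (by omega) hfn
        · exact suppLe_mono (by omega) (wS_supp p)
      obtain ⟨l, hl, hlen⟩ := ih (f * wS p) hfW (by omega)
      refine ⟨l ++ [p], ?_, ?_⟩
      · rw [List.map_append, List.prod_append, List.map_singleton, List.prod_singleton, hl,
          mul_assoc, wS_mul_self, mul_one]
      · rw [List.length_append, List.length_singleton, hlen]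
        omega

lemma len_eq_invB {f : Perm ℤ} (hf : InWinf f) : len f = invB f := by
  obtain ⟨l, hl, hlen⟩ := exists_word_aux (invB f) f hf le_rfl
  have hmem : invB f ∈ {m : ℕ | ∃ l : List ℕ, l.length = m ∧ (l.map wS).prod = f} :=
    ⟨l, hlen, hl⟩
  have h1 : len f ≤ invB f := Nat.sInf_le hmem
  have h2 : invB f ≤ len f := by
    have hmem2 := Nat.sInf_mem (⟨invB f, hmem⟩ :
      {m : ℕ | ∃ l : List ℕ, l.length = m ∧ (l.map wS).prod = f}.Nonempty)
    obtain ⟨l', hl'1, hl'2⟩ := hmem2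
    have := (word_invB l').2
    rw [hl'2, hl'1] at this
    exact this
  omega

/-! ### master corollary for `tt` -/

lemma tt_flip_iff (a b : ℕ) (ha : 1 ≤ a) (hab : a < b) (x y : ℤ) :
    (Rcond (x, y) ∧ tt a b y < tt a b x) ↔
      ((x = (a:ℤ) ∧ (a:ℤ) < y ∧ y < (b:ℤ)) ∨ ((a:ℤ) < x ∧ x < (b:ℤ) ∧ y = (b:ℤ)) ∨
        (x = (a:ℤ) ∧ y = (b:ℤ))) := by
  have h1 : (1:ℤ) ≤ (a:ℤ) := by exact_mod_cast ha
  have h2 : (a:ℤ) < (b:ℤ) := by exact_mod_cast hab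
  rw [tt_apply a b ha (by omega) (by omega), tt_apply a b ha (by omega) (by omega)]
  simp only [Rcond]
  split_ifs <;> omega

lemma cor_tt {u : Perm ℤ} (hu : IsOddPerm u) {n : ℕ} (hun : SuppLe n u)
    (a b : ℕ) (ha : 1 ≤ a) (hab : a < b) (hbn : b ≤ n) :
    invB (u * tt a b) + 2 * ((if u (b:ℤ) < u (a:ℤ) then 1 else 0)
      + ((Finset.Ioo (a:ℤ) (b:ℤ)).filter (fun j => u j < u (a:ℤ))).card
      + ((Finset.Ioo (a:ℤ) (b:ℤ)).filter (fun j => u (b:ℤ) < u j)).card)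
    = invB u + 2 * (Finset.Ioo (a:ℤ) (b:ℤ)).card + 1 := by
  classical
  have h1 : (1:ℤ) ≤ (a:ℤ) := by exact_mod_cast ha
  have h2 : (a:ℤ) < (b:ℤ) := by exact_mod_cast hab
  set A := (a:ℤ)
  set B := (b:ℤ)
  set D : Finset (ℤ × ℤ) := ((Finset.Ioo A B).image (fun j => (A, j))) ∪
      (((Finset.Ioo A B).image (fun j => (j, B))) ∪ {(A, B)}) with hDdef
  have inj1 : Function.Injective (fun j : ℤ => (A, j)) := fun p q h => by
    simpa using h
  have inj2 : Function.Injective (fun j : ℤ => (j, B)) := fun p q h => by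
    simpa using h
  have hmem : ∀ x y : ℤ, ((x, y) ∈ D) ↔
      ((x = A ∧ A < y ∧ y < B) ∨ (A < x ∧ x < B ∧ y = B) ∨ (x = A ∧ y = B)) := by
    intro x y
    simp only [hDdef, Finset.mem_union, Finset.mem_image, Finset.mem_Ioo,
      Finset.mem_singleton, Prod.mk.injEq]
    constructor
    · rintro (⟨j, hj, hx, hy⟩ | (⟨j, hj, hx, hy⟩ | ⟨hx, hy⟩)) <;> omega
    · rintro (⟨hx, hy1, hy2⟩ | ⟨hx1, hx2, hy⟩ | ⟨hx, hy⟩)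
      · exact Or.inl ⟨y, ⟨hy1, hy2⟩, by omega, by omega⟩
      · exact Or.inr (Or.inl ⟨x, ⟨hx1, hx2⟩, by omega, by omega⟩)
      · exact Or.inr (Or.inr ⟨by omega, by omega⟩)
  have hD : Dset (tt a b) = ↑D := by
    ext ⟨x, y⟩
    rw [Finset.mem_coe, hmem x y]
    exact tt_flip_iff a b ha hab x y
  have hπo : IsOddPerm (tt a b) := tt_odd a b ha (by omega) (by omega)
  have hπ2 := tt_invol a b ha (by omega) (by omega)
  have hπn : SuppLe n (tt a b) := tt_supp a b ha (by omega) (by omega) (by omega) hbn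
  have h := master_fin hu hπo hπ2 hun hπn D hD
  -- disjointness
  have d23 : Disjoint ((Finset.Ioo A B).image (fun j => (j, B))) ({(A, B)} : Finset (ℤ × ℤ)) := by
    simp only [Finset.disjoint_singleton_right, Finset.mem_image, Finset.mem_Ioo]
    rintro ⟨j, hj, he⟩
    rw [Prod.mk.injEq] at he
    omega
  have d123 : Disjoint ((Finset.Ioo A B).image (fun j => (A, j)))
      (((Finset.Ioo A B).image (fun j => (j, B))) ∪ {(A, B)}) := by
    rw [Finset.disjoint_left]
    rintro ⟨x, y⟩ hx hy
    simp only [Finset.mem_image, Finset.mem_Ioo, Prod.mk.injEq] at hx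
    simp only [Finset.mem_union, Finset.mem_image, Finset.mem_Ioo, Finset.mem_singleton,
      Prod.mk.injEq] at hy
    obtain ⟨j, hj, hx1, hx2⟩ := hx
    rcases hy with ⟨j', hj', hy1, hy2⟩ | ⟨hy1, hy2⟩ <;> omega
  have hcardD : D.card = 2 * (Finset.Ioo A B).card + 1 := by
    rw [hDdef, Finset.card_union_of_disjoint d123, Finset.card_union_of_disjoint d23,
      Finset.card_image_of_injective _ inj1, Finset.card_image_of_injective _ inj2,
      Finset.card_singleton]
    ring
  have hfilt : (D.filter fun p => u p.2 < u p.1).card =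
      ((Finset.Ioo A B).filter (fun j => u j < u A)).card
      + (((Finset.Ioo A B).filter (fun j => u B < u j)).card
      + (if u B < u A then 1 else 0)) := by
    rw [hDdef, Finset.filter_union,
      Finset.card_union_of_disjoint (Finset.disjoint_filter_filter d123),
      Finset.filter_union,
      Finset.card_union_of_disjoint (Finset.disjoint_filter_filter d23),
      Finset.filter_image, Finset.filter_image,
      Finset.card_image_of_injective _ inj1, Finset.card_image_of_injective _ inj2,
      Finset.filter_singleton]
    by_cases hc : u B < u A
    · rw [if_pos hc, if_pos hc, Finset.card_singleton]
    · rw [if_neg hc, if_neg hc, Finset.card_empty]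
  rw [hfilt, hcardD] at h
  omega

/-! ### filter-card helpers -/

lemma card_filter_image_snd (s : Finset ℤ) (c : ℤ) (u : Perm ℤ) :
    ((s.image (fun m => (m, c))).filter (fun p => u p.2 < u p.1)).card
      = (s.filter (fun m => u c < u m)).card := by
  classical
  rw [Finset.filter_image]
  rw [Finset.card_image_of_injective _ (fun p q h => by simpa using h :
    Function.Injective fun m : ℤ => (m, c))]

lemma card_filter_image_fst (s : Finset ℤ) (c : ℤ) (u : Perm ℤ) :
    ((s.image (fun j => (c, j))).filter (fun p => u p.2 < u p.1)).card
      = (s.filter (fun j => u j < u c)).card := by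
  classical
  rw [Finset.filter_image]
  rw [Finset.card_image_of_injective _ (fun p q h => by simpa using h :
    Function.Injective fun j : ℤ => (c, j))]

lemma card_filter_singleton (x y : ℤ) (u : Perm ℤ) :
    (({(x, y)} : Finset (ℤ × ℤ)).filter (fun p => u p.2 < u p.1)).card
      = if u y < u x then 1 else 0 := by
  classical
  rw [Finset.filter_singleton]
  split_ifs <;> simp

/-! ### master corollary for `tb` -/

lemma tb_flip_iff (a b : ℕ) (ha : 1 ≤ a) (hab : a < b) (x y : ℤ) :
    (Rcond (x, y) ∧ tb a b y < tb a b x) ↔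
      ((0 < x ∧ x < (a:ℤ) ∧ y = (a:ℤ)) ∨ (-(a:ℤ) < x ∧ x < 0 ∧ y = (a:ℤ)) ∨
       (x = -(a:ℤ) ∧ y = (a:ℤ)) ∨ (x = -(a:ℤ) ∧ (a:ℤ) < y ∧ y < (b:ℤ)) ∨
       (x = -(a:ℤ) ∧ y = (b:ℤ)) ∨ (x = -(b:ℤ) ∧ y = (b:ℤ)) ∨
       (0 < x ∧ x < (a:ℤ) ∧ y = (b:ℤ)) ∨ (-(a:ℤ) < x ∧ x < 0 ∧ y = (b:ℤ)) ∨
       ((a:ℤ) < x ∧ x < (b:ℤ) ∧ y = (b:ℤ))) := by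
  have h1 : (1:ℤ) ≤ (a:ℤ) := by exact_mod_cast ha
  have h2 : (a:ℤ) < (b:ℤ) := by exact_mod_cast hab
  rw [tb_apply a b ha (by omega) (by omega), tb_apply a b ha (by omega) (by omega)]
  simp only [Rcond]
  split_ifs <;> omega

lemma cor_tb {u : Perm ℤ} (hu : IsOddPerm u) {n : ℕ} (hun : SuppLe n u)
    (a b : ℕ) (ha : 1 ≤ a) (hab : a < b) (hbn : b ≤ n) :
    invB (u * tb a b) + 2 * (
        ((Finset.Ioo (0:ℤ) (a:ℤ)).filter (fun m => u (a:ℤ) < u m)).card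
      + ((Finset.Ioo (-(a:ℤ)) (0:ℤ)).filter (fun m => u (a:ℤ) < u m)).card
      + (if u (a:ℤ) < 0 then 1 else 0)
      + ((Finset.Ioo (a:ℤ) (b:ℤ)).filter (fun j => u j < -u (a:ℤ))).card
      + (if u (b:ℤ) < -u (a:ℤ) then 1 else 0)
      + (if u (b:ℤ) < 0 then 1 else 0)
      + ((Finset.Ioo (0:ℤ) (a:ℤ)).filter (fun m => u (b:ℤ) < u m)).card
      + ((Finset.Ioo (-(a:ℤ)) (0:ℤ)).filter (fun m => u (b:ℤ) < u m)).card
      + ((Finset.Ioo (a:ℤ) (b:ℤ)).filter (fun j => u (b:ℤ) < u j)).card)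
    = invB u + 4 * (Finset.Ioo (0:ℤ) (a:ℤ)).card + 2 * (Finset.Ioo (a:ℤ) (b:ℤ)).card + 3 := by
  classical
  have h1 : (1:ℤ) ≤ (a:ℤ) := by exact_mod_cast ha
  have h2 : (a:ℤ) < (b:ℤ) := by exact_mod_cast hab
  set A := (a:ℤ) with hA
  set B := (b:ℤ) with hB
  have eA : u (-A) = -u A := hu A
  have eB : u (-B) = -u B := hu B
  set Q1 : Finset (ℤ × ℤ) := (Finset.Ioo (0:ℤ) A).image (fun m => (m, A)) with hQ1
  set Q2 : Finset (ℤ × ℤ) := (Finset.Ioo (-A) (0:ℤ)).image (fun m => (m, A)) with hQ2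
  set Q3 : Finset (ℤ × ℤ) := {(-A, A)} with hQ3
  set Q4 : Finset (ℤ × ℤ) := (Finset.Ioo A B).image (fun j => (-A, j)) with hQ4
  set Q5 : Finset (ℤ × ℤ) := {(-A, B)} with hQ5
  set Q6 : Finset (ℤ × ℤ) := {(-B, B)} with hQ6
  set Q7 : Finset (ℤ × ℤ) := (Finset.Ioo (0:ℤ) A).image (fun m => (m, B)) with hQ7
  set Q8 : Finset (ℤ × ℤ) := (Finset.Ioo (-A) (0:ℤ)).image (fun m => (m, B)) with hQ8
  set Q9 : Finset (ℤ × ℤ) := (Finset.Ioo A B).image (fun j => (j, B)) with hQ9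
  have injA : Function.Injective (fun m : ℤ => (m, A)) := fun p q h => by simpa using h
  have injB' : Function.Injective (fun m : ℤ => (m, B)) := fun p q h => by simpa using h
  have injA2 : Function.Injective (fun j : ℤ => (-A, j)) := fun p q h => by simpa using h
  have m1 : ∀ x y : ℤ, ((x, y) ∈ Q1) ↔ (0 < x ∧ x < A ∧ y = A) := by
    intro x y
    simp only [hQ1, Finset.mem_image, Finset.mem_Ioo, Prod.mk.injEq]
    constructor
    · rintro ⟨m, hm, hx, hy⟩; omega
    · rintro ⟨hx1, hx2, hy⟩; exact ⟨x, ⟨by omega, by omega⟩, by omega, by omega⟩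
  have m2 : ∀ x y : ℤ, ((x, y) ∈ Q2) ↔ (-A < x ∧ x < 0 ∧ y = A) := by
    intro x y
    simp only [hQ2, Finset.mem_image, Finset.mem_Ioo, Prod.mk.injEq]
    constructor
    · rintro ⟨m, hm, hx, hy⟩; omega
    · rintro ⟨hx1, hx2, hy⟩; exact ⟨x, ⟨by omega, by omega⟩, by omega, by omega⟩
  have m3 : ∀ x y : ℤ, ((x, y) ∈ Q3) ↔ (x = -A ∧ y = A) := by
    intro x y
    simp only [hQ3, Finset.mem_singleton, Prod.mk.injEq]
  have m4 : ∀ x y : ℤ, ((x, y) ∈ Q4) ↔ (x = -A ∧ A < y ∧ y < B) := by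
    intro x y
    simp only [hQ4, Finset.mem_image, Finset.mem_Ioo, Prod.mk.injEq]
    constructor
    · rintro ⟨j, hj, hx, hy⟩; omega
    · rintro ⟨hx, hy1, hy2⟩; exact ⟨y, ⟨by omega, by omega⟩, by omega, by omega⟩
  have m5 : ∀ x y : ℤ, ((x, y) ∈ Q5) ↔ (x = -A ∧ y = B) := by
    intro x y
    simp only [hQ5, Finset.mem_singleton, Prod.mk.injEq]
  have m6 : ∀ x y : ℤ, ((x, y) ∈ Q6) ↔ (x = -B ∧ y = B) := by
    intro x y
    simp only [hQ6, Finset.mem_singleton, Prod.mk.injEq]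
  have m7 : ∀ x y : ℤ, ((x, y) ∈ Q7) ↔ (0 < x ∧ x < A ∧ y = B) := by
    intro x y
    simp only [hQ7, Finset.mem_image, Finset.mem_Ioo, Prod.mk.injEq]
    constructor
    · rintro ⟨m, hm, hx, hy⟩; omega
    · rintro ⟨hx1, hx2, hy⟩; exact ⟨x, ⟨by omega, by omega⟩, by omega, by omega⟩
  have m8 : ∀ x y : ℤ, ((x, y) ∈ Q8) ↔ (-A < x ∧ x < 0 ∧ y = B) := by
    intro x y
    simp only [hQ8, Finset.mem_image, Finset.mem_Ioo, Prod.mk.injEq]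
    constructor
    · rintro ⟨m, hm, hx, hy⟩; omega
    · rintro ⟨hx1, hx2, hy⟩; exact ⟨x, ⟨by omega, by omega⟩, by omega, by omega⟩
  have m9 : ∀ x y : ℤ, ((x, y) ∈ Q9) ↔ (A < x ∧ x < B ∧ y = B) := by
    intro x y
    simp only [hQ9, Finset.mem_image, Finset.mem_Ioo, Prod.mk.injEq]
    constructor
    · rintro ⟨j, hj, hx, hy⟩; omega
    · rintro ⟨hx1, hx2, hy⟩; exact ⟨x, ⟨by omega, by omega⟩, by omega, by omega⟩
  set D : Finset (ℤ × ℤ) := Q1 ∪ (Q2 ∪ (Q3 ∪ (Q4 ∪ (Q5 ∪ (Q6 ∪ (Q7 ∪ (Q8 ∪ Q9))))))) with hDdef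
  have hD : Dset (tb a b) = ↑D := by
    ext ⟨x, y⟩
    rw [Finset.mem_coe, hDdef]
    simp only [Finset.mem_union, m1, m2, m3, m4, m5, m6, m7, m8, m9]
    exact tb_flip_iff a b ha hab x y
  have hπo : IsOddPerm (tb a b) := tb_odd a b ha (by omega)
  have hπ2 := tb_invol a b ha (by omega)
  have hπn : SuppLe n (tb a b) := tb_supp a b ha (by omega) (by omega) hbn
  have h := master_fin hu hπo hπ2 hun hπn D hD
  have d8 : Disjoint Q8 Q9 := by
    rw [Finset.disjoint_left]; rintro ⟨x, y⟩ hp hq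
    rw [m8] at hp; rw [m9] at hq; omega
  have d7 : Disjoint Q7 (Q8 ∪ Q9) := by
    rw [Finset.disjoint_left]; rintro ⟨x, y⟩ hp hq
    rw [m7] at hp; simp only [Finset.mem_union, m8, m9] at hq; omega
  have d6 : Disjoint Q6 (Q7 ∪ (Q8 ∪ Q9)) := by
    rw [Finset.disjoint_left]; rintro ⟨x, y⟩ hp hq
    rw [m6] at hp; simp only [Finset.mem_union, m7, m8, m9] at hq; omega
  have d5 : Disjoint Q5 (Q6 ∪ (Q7 ∪ (Q8 ∪ Q9))) := by
    rw [Finset.disjoint_left]; rintro ⟨x, y⟩ hp hq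
    rw [m5] at hp; simp only [Finset.mem_union, m6, m7, m8, m9] at hq; omega
  have d4 : Disjoint Q4 (Q5 ∪ (Q6 ∪ (Q7 ∪ (Q8 ∪ Q9)))) := by
    rw [Finset.disjoint_left]; rintro ⟨x, y⟩ hp hq
    rw [m4] at hp; simp only [Finset.mem_union, m5, m6, m7, m8, m9] at hq; omega
  have d3 : Disjoint Q3 (Q4 ∪ (Q5 ∪ (Q6 ∪ (Q7 ∪ (Q8 ∪ Q9))))) := by
    rw [Finset.disjoint_left]; rintro ⟨x, y⟩ hp hq
    rw [m3] at hp; simp only [Finset.mem_union, m4, m5, m6, m7, m8, m9] at hq; omega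
  have d2 : Disjoint Q2 (Q3 ∪ (Q4 ∪ (Q5 ∪ (Q6 ∪ (Q7 ∪ (Q8 ∪ Q9)))))) := by
    rw [Finset.disjoint_left]; rintro ⟨x, y⟩ hp hq
    rw [m2] at hp; simp only [Finset.mem_union, m3, m4, m5, m6, m7, m8, m9] at hq; omega
  have d1 : Disjoint Q1 (Q2 ∪ (Q3 ∪ (Q4 ∪ (Q5 ∪ (Q6 ∪ (Q7 ∪ (Q8 ∪ Q9))))))) := by
    rw [Finset.disjoint_left]; rintro ⟨x, y⟩ hp hq
    rw [m1] at hp; simp only [Finset.mem_union, m2, m3, m4, m5, m6, m7, m8, m9] at hq; omega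
  have hcardneg : (Finset.Ioo (-A) (0:ℤ)).card = (Finset.Ioo (0:ℤ) A).card := by
    rw [Int.card_Ioo, Int.card_Ioo]; congr 1; ring
  have hcardD : D.card = 4 * (Finset.Ioo (0:ℤ) A).card + 2 * (Finset.Ioo A B).card + 3 := by
    rw [hDdef, Finset.card_union_of_disjoint d1, Finset.card_union_of_disjoint d2,
      Finset.card_union_of_disjoint d3, Finset.card_union_of_disjoint d4,
      Finset.card_union_of_disjoint d5, Finset.card_union_of_disjoint d6,
      Finset.card_union_of_disjoint d7, Finset.card_union_of_disjoint d8,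
      hQ1, hQ2, hQ3, hQ4, hQ5, hQ6, hQ7, hQ8, hQ9,
      Finset.card_image_of_injective _ injA, Finset.card_image_of_injective _ injA,
      Finset.card_image_of_injective _ injA2, Finset.card_image_of_injective _ injB',
      Finset.card_image_of_injective _ injB', Finset.card_image_of_injective _ injB',
      Finset.card_singleton, Finset.card_singleton, Finset.card_singleton, hcardneg]
    ring
  rw [hDdef, Finset.filter_union,
      Finset.card_union_of_disjoint (Finset.disjoint_filter_filter d1), Finset.filter_union,
      Finset.card_union_of_disjoint (Finset.disjoint_filter_filter d2), Finset.filter_union,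
      Finset.card_union_of_disjoint (Finset.disjoint_filter_filter d3), Finset.filter_union,
      Finset.card_union_of_disjoint (Finset.disjoint_filter_filter d4), Finset.filter_union,
      Finset.card_union_of_disjoint (Finset.disjoint_filter_filter d5), Finset.filter_union,
      Finset.card_union_of_disjoint (Finset.disjoint_filter_filter d6), Finset.filter_union,
      Finset.card_union_of_disjoint (Finset.disjoint_filter_filter d7), Finset.filter_union,
      Finset.card_union_of_disjoint (Finset.disjoint_filter_filter d8)] at h
  rw [hQ1, hQ2, hQ3, hQ4, hQ5, hQ6, hQ7, hQ8, hQ9] at h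
  rw [card_filter_image_snd (Finset.Ioo (0:ℤ) A) A u,
      card_filter_image_snd (Finset.Ioo (-A) (0:ℤ)) A u,
      card_filter_singleton (-A) A u,
      card_filter_image_fst (Finset.Ioo A B) (-A) u,
      card_filter_singleton (-A) B u,
      card_filter_singleton (-B) B u,
      card_filter_image_snd (Finset.Ioo (0:ℤ) A) B u,
      card_filter_image_snd (Finset.Ioo (-A) (0:ℤ)) B u,
      card_filter_image_snd (Finset.Ioo A B) B u] at h
  have e3 : (if u A < u (-A) then (1:ℕ) else 0) = (if u A < 0 then 1 else 0) := by
    rw [eA]; exact if_congr (by omega) rfl rfl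
  have e5 : (if u B < u (-A) then (1:ℕ) else 0) = (if u B < -u A then 1 else 0) := by
    rw [eA]
  have e6 : (if u B < u (-B) then (1:ℕ) else 0) = (if u B < 0 then 1 else 0) := by
    rw [eB]; exact if_congr (by omega) rfl rfl
  have e4 : (Finset.Ioo A B).filter (fun j => u j < u (-A)) =
      (Finset.Ioo A B).filter (fun j => u j < -u A) := by rw [eA]
  rw [e3, e5, e6, e4, hcardD] at h
  omega

-- MORE4

/-!
STATEMENT 10: If `w ∈ W_∞` is increasing up to `k` and not `k`-Grassmannian,
with last descent `r > k` and `s` maximal such that `w_s < w_r`, then every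
element of `Φ(w)` is again increasing up to `k`.
-/

theorem transition_set_increasing (k : ℕ) (w : Equiv.Perm ℤ) (hW : InWinf w)
    (hinc : IncUpTo k w) (hng : ¬ kGrass k w) (r s : ℕ)
    (hrd : Descent w r) (hrlast : ∀ p : ℕ, r < p → ¬ Descent w p) (hrk : k < r)
    (hs1 : r < s) (hs2 : w (s : ℤ) < w (r : ℤ))
    (hs3 : ∀ j : ℕ, s < j → ¬ (w (j : ℤ) < w (r : ℤ))) :
    ∀ v ∈ Phi w r s, IncUpTo k v := by
  obtain ⟨hwo, n0, hw0⟩ := hW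
  have hr1 : 1 ≤ r := by omega
  set n := max n0 s with hn
  have hwn : SuppLe n w := suppLe_mono (le_max_left _ _) hw0
  have hsn : s ≤ n := le_max_right _ _
  have hrn : r ≤ n := by omega
  -- w is increasing after position r
  have hastep : ∀ m : ℕ, r < m → w (m : ℤ) < w ((m + 1 : ℕ) : ℤ) := by
    intro m hm
    have hd := hrlast m hm
    simp only [Descent, if_neg (by omega : m ≠ 0)] at hd
    push_neg at hd
    have hcast : ((m : ℤ) + 1) = ((m + 1 : ℕ) : ℤ) := by push_cast; ring
    rw [hcast] at hd
    rcases lt_or_eq_of_le hd with h' | h'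
    · exact h'
    · exfalso
      have := w.injective h'
      omega
  have hafter : ∀ j j' : ℕ, r < j → j < j' → w (j : ℤ) < w (j' : ℤ) := by
    intro j j' hj hjj'
    induction j' with
    | zero => omega
    | succ m ih =>
      rcases Nat.lt_or_ge j m with h | h
      · exact lt_trans (ih h) (hastep m (by omega))
      · have : j = m := by omega
        subst this
        exact hastep j hj
  -- w is increasing on [1, k]
  have hwstep : ∀ m : ℕ, 1 ≤ m → m < k → w (m : ℤ) < w ((m + 1 : ℕ) : ℤ) := by
    intro m hm hmk
    have hd := hinc m hmk
    simp only [Descent, if_neg (by omega : m ≠ 0)] at hd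
    push_neg at hd
    have hcast : ((m : ℤ) + 1) = ((m + 1 : ℕ) : ℤ) := by push_cast; ring
    rw [hcast] at hd
    rcases lt_or_eq_of_le hd with h' | h'
    · exact h'
    · exfalso
      have := w.injective h'
      omega
  have hwmono : ∀ m m' : ℕ, 1 ≤ m → m < m' → m' ≤ k → w (m : ℤ) < w (m' : ℤ) := by
    intro m m' hm hmm' hm'k
    induction m' with
    | zero => omega
    | succ c ih =>
      rcases Nat.lt_or_ge m c with h | h
      · exact lt_trans (ih h (by omega)) (hwstep c (by omega) (by omega))
      · have : m = c := by omega
        subst this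
        exact hwstep m hm (by omega)
  have hw1 : 1 ≤ k → 0 < w (1 : ℤ) := by
    intro hk
    have hd := hinc 0 hk
    simp only [Descent, if_pos rfl] at hd
    push_neg at hd
    norm_num at hd
    rcases lt_or_eq_of_le hd with h' | h'
    · exact h'
    · exfalso
      exact odd_ne_zero hwo (by omega : (1:ℤ) ≠ 0) h'.symm
  have hwpos : ∀ m : ℕ, 1 ≤ m → m ≤ k → 0 < w (m : ℤ) := by
    intro m hm hmk
    rcases Nat.lt_or_ge 1 m with h | h
    · exact lt_trans (hw1 (by omega)) (hwmono 1 m (by omega) (by omega) hmk)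
    · have : m = 1 := by omega
      subst this
      exact hw1 (by omega)
  intro v hv
  -- step A : invB (w * tt r s) + 1 = invB w
  have hAeq := cor_tt hwo hwn r s hr1 hs1 hsn
  have hf1 : (Finset.Ioo (r:ℤ) (s:ℤ)).filter (fun j => w j < w (r:ℤ)) =
      Finset.Ioo (r:ℤ) (s:ℤ) := by
    apply Finset.filter_true_of_mem
    intro j hj
    rw [Finset.mem_Ioo] at hj
    obtain ⟨m, rfl⟩ : ∃ m : ℕ, (m : ℤ) = j := ⟨j.toNat, by omega⟩
    have h1 : r < m := by exact_mod_cast hj.1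
    have h2 : m < s := by exact_mod_cast hj.2
    exact lt_trans (hafter m s h1 h2) hs2
  have hf2 : (Finset.Ioo (r:ℤ) (s:ℤ)).filter (fun j => w (s:ℤ) < w j) = ∅ := by
    apply Finset.filter_false_of_mem
    intro j hj
    rw [Finset.mem_Ioo] at hj
    obtain ⟨m, rfl⟩ : ∃ m : ℕ, (m : ℤ) = j := ⟨j.toNat, by omega⟩
    have h1 : r < m := by exact_mod_cast hj.1
    have h2 : m < s := by exact_mod_cast hj.2
    have := hafter m s h1 h2
    omega
  rw [hf1, hf2, if_pos hs2, Finset.card_empty] at hAeq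
  set u := w * tt r s with hudef
  have hstepA : invB u + 1 = invB w := by omega
  have huodd : IsOddPerm u := odd_mul hwo (tt_odd r s hr1 (by omega) (by omega))
  have hun : SuppLe n u :=
    suppLe_mul hwn (tt_supp r s hr1 (by omega) (by omega) hrn hsn)
  have hu_small : ∀ m : ℕ, 1 ≤ m → m ≤ k → u (m : ℤ) = w (m : ℤ) := by
    intro m hm hmk
    have hfix : tt r s (m : ℤ) = (m : ℤ) := by
      rw [tt_apply r s hr1 (by omega) (by omega)]
      have c1 : (m : ℤ) < (r : ℤ) := by exact_mod_cast (by omega : m < r)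
      have c2 : (r : ℤ) < (s : ℤ) := by exact_mod_cast hs1
      have c3 : (1 : ℤ) ≤ (m : ℤ) := by exact_mod_cast hm
      have c4 : (1 : ℤ) ≤ (r : ℤ) := by exact_mod_cast hr1
      split_ifs <;> omega
    simp only [hudef, Perm.mul_apply, hfix]
  have hur : u (r : ℤ) = w (s : ℤ) := by
    have hfix : tt r s (r : ℤ) = (s : ℤ) := by
      rw [tt_apply r s hr1 (by omega) (by omega)]
      simp
    simp only [hudef, Perm.mul_apply, hfix]
  have hupos : ∀ m : ℕ, 1 ≤ m → m ≤ k → 0 < u (m : ℤ) := by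
    intro m hm hmk
    rw [hu_small m hm hmk]
    exact hwpos m hm hmk
  have humono : ∀ m m' : ℕ, 1 ≤ m → m < m' → m' ≤ k → u (m : ℤ) < u (m' : ℤ) := by
    intro m m' hm hmm' hm'
    rw [hu_small m hm (by omega), hu_small m' (by omega) hm']
    exact hwmono m m' hm hmm' hm'
  have hwinf : InWinf w := ⟨hwo, n0, hw0⟩
  -- helper: increasing-up-to-k from value description
  have key_inc : ∀ (v' : Perm ℤ) (i : ℕ) (c : ℤ), 1 ≤ i → i ≤ k →
      (∀ m : ℕ, 1 ≤ m → m ≤ k → m ≠ i → v' (m : ℤ) = w (m : ℤ)) → (v' (i : ℤ) = c) →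
      (2 ≤ i → w ((i - 1 : ℕ) : ℤ) < c) → (i = 1 → 0 < c) →
      (i < k → c < w ((i + 1 : ℕ) : ℤ)) → IncUpTo k v' := by
    intro v' i c hi1 hik hvals hvi hclow hc0 hchigh
    intro p hp hdes
    have hcast : ((p : ℤ) + 1) = ((p + 1 : ℕ) : ℤ) := by push_cast; ring
    simp only [Descent, hcast] at hdes
    by_cases hp0 : p = 0
    · rw [if_pos hp0] at hdes
      subst hp0
      rw [show ((0:ℕ) + 1) = 1 from rfl] at hdes
      by_cases hi : i = 1
      · have e1 : v' ((1:ℕ) : ℤ) = c := by rw [← hi]; exact hvi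
        have := hc0 hi
        rw [e1] at hdes
        omega
      · have e1 : v' ((1:ℕ) : ℤ) = w ((1:ℕ):ℤ) := hvals 1 (by omega) (by omega) (by omega)
        have := hwpos 1 (by omega) (by omega)
        rw [e1] at hdes
        push_cast at hdes this
        omega
    · rw [if_neg hp0] at hdes
      by_cases hip : i = p
      · have e1 : v' ((p:ℕ) : ℤ) = c := by rw [← hip]; exact hvi
        have e2 : v' ((p + 1 : ℕ) : ℤ) = w ((p + 1 : ℕ) : ℤ) :=
          hvals (p + 1) (by omega) (by omega) (by omega)
        have h3 := hchigh (by omega)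
        rw [show (i + 1 : ℕ) = p + 1 from by omega] at h3
        rw [e1, e2] at hdes
        omega
      · by_cases hip1 : i = p + 1
        · have e1 : v' ((p + 1 : ℕ) : ℤ) = c := by rw [← hip1]; exact hvi
          have e2 : v' ((p:ℕ) : ℤ) = w ((p:ℕ) : ℤ) := hvals p (by omega) (by omega) (by omega)
          have h3 := hclow (by omega)
          rw [show (i - 1 : ℕ) = p from by omega] at h3
          rw [e1, e2] at hdes
          omega
        · have e1 : v' ((p + 1 : ℕ) : ℤ) = w ((p + 1 : ℕ) : ℤ) :=
            hvals (p + 1) (by omega) (by omega) (by omega)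
          have e2 : v' ((p:ℕ) : ℤ) = w ((p:ℕ) : ℤ) := hvals p (by omega) (by omega) (by omega)
          refine hinc p hp ?_
          simp only [Descent, hcast, if_neg hp0]
          rw [e1, e2] at hdes
          exact hdes
  have inc_triv : ∀ v' : Perm ℤ, (∀ m : ℕ, 1 ≤ m → m ≤ k → v' (m : ℤ) = w (m : ℤ)) →
      IncUpTo k v' := by
    intro v' hvals p hp hdes
    have hcast : ((p : ℤ) + 1) = ((p + 1 : ℕ) : ℤ) := by push_cast; ring
    simp only [Descent, hcast] at hdes
    refine hinc p hp ?_
    simp only [Descent, hcast]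
    rw [hvals (p + 1) (by omega) (by omega)] at hdes
    by_cases hp0 : p = 0
    · rw [if_pos hp0] at hdes ⊢
      exact hdes
    · rw [if_neg hp0] at hdes ⊢
      rw [hvals p (by omega) (by omega)] at hdes
      exact hdes
  rcases hv with hv | hv
  · -- Φ₁ case
    obtain ⟨i, hi1, hir, hlen, rfl⟩ := hv
    rw [← hudef] at hlen ⊢
    by_cases hik : i ≤ k
    · -- main branch
      have hvinf : InWinf (u * tt i r) := by
        refine ⟨odd_mul huodd (tt_odd i r hi1 hr1 (by omega)), n, suppLe_mul hun ?_⟩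
        exact tt_supp i r hi1 hr1 (by omega) (by omega) hrn
      have hinvv : invB (u * tt i r) = invB w := by
        rw [← len_eq_invB hvinf, ← len_eq_invB hwinf]
        exact hlen
      have hB := cor_tt huodd hun i r hi1 hir hrn
      -- The balance equation : T = card Ioo
      have hA' : u (i : ℤ) < u (r : ℤ) := by
        by_contra hcon
        push_neg at hcon
        have hne : u (r : ℤ) ≠ u (i : ℤ) := fun he => by
          have := u.injective he
          have : (r : ℤ) = (i : ℤ) := this
          have : r = i := by exact_mod_cast this
          omega
        have hlt : u (r : ℤ) < u (i : ℤ) := by omega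
        have hsub : Finset.Ioo (i:ℤ) (r:ℤ) ⊆
            ((Finset.Ioo (i:ℤ) (r:ℤ)).filter (fun j => u j < u (i:ℤ))) ∪
            ((Finset.Ioo (i:ℤ) (r:ℤ)).filter (fun j => u (r:ℤ) < u j)) := by
          intro j hj
          rw [Finset.mem_union, Finset.mem_filter, Finset.mem_filter]
          by_cases hc : u j < u (i:ℤ)
          · exact Or.inl ⟨hj, hc⟩
          · refine Or.inr ⟨hj, by omega⟩
        have hcard := Finset.card_le_card hsub
        have hcard2 := Finset.card_union_le
          ((Finset.Ioo (i:ℤ) (r:ℤ)).filter (fun j => u j < u (i:ℤ)))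
          ((Finset.Ioo (i:ℤ) (r:ℤ)).filter (fun j => u (r:ℤ) < u j))
        rw [if_pos hlt] at hB
        omega
      have hB' : i < k → u (r : ℤ) < u ((i + 1 : ℕ) : ℤ) := by
        intro hik'
        by_contra hcon
        push_neg at hcon
        have hne : u ((i + 1 : ℕ) : ℤ) ≠ u (r : ℤ) := fun he => by
          have := u.injective he
          have : ((i + 1 : ℕ) : ℤ) = (r : ℤ) := this
          have : i + 1 = r := by exact_mod_cast this
          omega
        have hlt : u ((i + 1 : ℕ) : ℤ) < u (r : ℤ) := by omega
        have hmem : ((i + 1 : ℕ) : ℤ) ∈ Finset.Ioo (i:ℤ) (r:ℤ) := by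
          rw [Finset.mem_Ioo]
          constructor <;> [push_cast; push_cast] <;> omega
        have hui : u (i : ℤ) < u ((i + 1 : ℕ) : ℤ) := humono i (i+1) hi1 (by omega) (by omega)
        have hdis : Disjoint ((Finset.Ioo (i:ℤ) (r:ℤ)).filter (fun j => u j < u (i:ℤ)))
            ((Finset.Ioo (i:ℤ) (r:ℤ)).filter (fun j => u (r:ℤ) < u j)) := by
          rw [Finset.disjoint_left]
          intro j hj1 hj2
          rw [Finset.mem_filter] at hj1 hj2
          omega
        have hsub : ((Finset.Ioo (i:ℤ) (r:ℤ)).filter (fun j => u j < u (i:ℤ))) ∪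
            ((Finset.Ioo (i:ℤ) (r:ℤ)).filter (fun j => u (r:ℤ) < u j)) ⊆
            (Finset.Ioo (i:ℤ) (r:ℤ)).erase ((i + 1 : ℕ) : ℤ) := by
          intro j hj
          rw [Finset.mem_union, Finset.mem_filter, Finset.mem_filter] at hj
          rw [Finset.mem_erase]
          rcases hj with ⟨hj1, hj2⟩ | ⟨hj1, hj2⟩
          · refine ⟨fun he => ?_, hj1⟩
            rw [he] at hj2
            omega
          · refine ⟨fun he => ?_, hj1⟩
            rw [he] at hj2
            omega
        have hcard := Finset.card_le_card hsub
        rw [Finset.card_erase_of_mem hmem] at hcard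
        have hsum := Finset.card_union_of_disjoint hdis
        have hpos : 0 < (Finset.Ioo (i:ℤ) (r:ℤ)).card := Finset.card_pos.mpr ⟨_, hmem⟩
        have hcard3 := Finset.card_union_le
          ((Finset.Ioo (i:ℤ) (r:ℤ)).filter (fun j => u j < u (i:ℤ)))
          ((Finset.Ioo (i:ℤ) (r:ℤ)).filter (fun j => u (r:ℤ) < u j))
        rw [if_neg (by omega : ¬ u (r:ℤ) < u (i:ℤ))] at hB
        have hcard4 := Finset.card_le_card (Finset.union_subset
          (Finset.filter_subset _ _) (Finset.filter_subset _ _) :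
          ((Finset.Ioo (i:ℤ) (r:ℤ)).filter (fun j => u j < u (i:ℤ))) ∪
            ((Finset.Ioo (i:ℤ) (r:ℤ)).filter (fun j => u (r:ℤ) < u j)) ⊆ _)
        omega
      -- values of v
      refine key_inc (u * tt i r) i (u (r : ℤ)) hi1 hik ?_ ?_ ?_ ?_ ?_
      · intro m hm hmk hmi
        have hfix : tt i r (m : ℤ) = (m : ℤ) := by
          rw [tt_apply i r hi1 hr1 (by omega)]
          have c1 : (m : ℤ) ≠ (i : ℤ) := by exact_mod_cast (by omega : m ≠ i)
          have c2 : (m : ℤ) < (r : ℤ) := by exact_mod_cast (by omega : m < r)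
          have c3 : (1 : ℤ) ≤ (m : ℤ) := by exact_mod_cast hm
          have c4 : (1 : ℤ) ≤ (i : ℤ) := by exact_mod_cast hi1
          have c5 : (1 : ℤ) ≤ (r : ℤ) := by exact_mod_cast hr1
          split_ifs <;> omega
        simp only [Perm.mul_apply, hfix]
        exact hu_small m hm hmk
      · have hfix : tt i r (i : ℤ) = (r : ℤ) := by
          rw [tt_apply i r hi1 hr1 (by omega)]
          simp
        simp only [Perm.mul_apply, hfix]
      · intro hi2
        have := humono (i-1) i (by omega) (by omega) hik
        rw [hu_small (i-1) (by omega) (by omega)] at this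
        omega
      · intro hi
        have h1 := hupos 1 (by omega) (by omega)
        have h2 : u ((1:ℕ) : ℤ) < u (r : ℤ) := by
          rw [show (1:ℕ) = i from hi.symm]
          exact hA'
        push_cast at h1 h2
        omega
      · intro hik'
        have := hB' hik'
        rw [hu_small (i+1) (by omega) (by omega)] at this
        omega
    · -- trivial branch : i > k
      refine inc_triv (u * tt i r) ?_
      intro m hm hmk
      have hfix : tt i r (m : ℤ) = (m : ℤ) := by
        rw [tt_apply i r hi1 hr1 (by omega)]
        have c1 : (m : ℤ) < (i : ℤ) := by exact_mod_cast (by omega : m < i)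
        have c2 : (m : ℤ) < (r : ℤ) := by exact_mod_cast (by omega : m < r)
        have c3 : (1 : ℤ) ≤ (m : ℤ) := by exact_mod_cast hm
        have c4 : (1 : ℤ) ≤ (i : ℤ) := by exact_mod_cast hi1
        have c5 : (1 : ℤ) ≤ (r : ℤ) := by exact_mod_cast hr1
        split_ifs <;> omega
      simp only [Perm.mul_apply, hfix]
      exact hu_small m hm hmk
  · -- Φ₂ case
    obtain ⟨i, hi1, hlen, rfl⟩ := hv
    rw [← hudef] at hlen ⊢
    by_cases hik : i ≤ k
    · -- main branch : i ≤ k < r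
      have hir : i < r := by omega
      have hvinf : InWinf (u * tb i r) := by
        refine ⟨odd_mul huodd (tb_odd i r hi1 hr1), n, suppLe_mul hun ?_⟩
        exact tb_supp i r hi1 hr1 (by omega) hrn
      have hinvv : invB (u * tb i r) = invB w := by
        rw [← len_eq_invB hvinf, ← len_eq_invB hwinf]
        exact hlen
      have hB := cor_tb huodd hun i r hi1 hir hrn
      have hAA : (Finset.Ioo (-(i:ℤ)) (0:ℤ)).card = (Finset.Ioo (0:ℤ) (i:ℤ)).card := by
        rw [Int.card_Ioo, Int.card_Ioo]; congr 1; ring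
      have hposr : (0:ℤ) < (r:ℤ) := by exact_mod_cast hr1
      have hne_r_neg : ∀ m : ℕ, u ((m:ℕ) : ℤ) ≠ -u (r:ℤ) := by
        intro m he
        have h2 : u ((m:ℕ):ℤ) = u (-(r:ℤ)) := by rw [huodd (r:ℤ)]; exact he
        have h3 := u.injective h2
        omega
      -- (c1)
      have hc1 : 2 ≤ i → u ((i - 1 : ℕ) : ℤ) < -u (r : ℤ) := by
        intro hi2
        by_contra hcon
        push_neg at hcon
        have hlt : -u (r : ℤ) < u ((i - 1 : ℕ) : ℤ) := by
          rcases lt_or_eq_of_le hcon with h' | h'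
          · exact h'
          · exact absurd h'.symm (hne_r_neg (i-1))
        have hii : u ((i-1 : ℕ) : ℤ) < u (i : ℤ) := humono (i-1) i (by omega) (by omega) hik
        -- t1 = 0
        have b1 : (Finset.Ioo (0:ℤ) (i:ℤ)).filter (fun m => u (i:ℤ) < u m) = ∅ := by
          apply Finset.filter_false_of_mem
          intro j hj
          rw [Finset.mem_Ioo] at hj
          obtain ⟨m, rfl⟩ : ∃ m : ℕ, (m : ℤ) = j := ⟨j.toNat, by omega⟩
          have h1 : 1 ≤ m := by exact_mod_cast hj.1
          have h2 : m < i := by exact_mod_cast hj.2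
          have := humono m i h1 h2 hik
          omega
        have b2 : (Finset.Ioo (-(i:ℤ)) (0:ℤ)).filter (fun m => u (i:ℤ) < u m) = ∅ := by
          apply Finset.filter_false_of_mem
          intro j hj
          rw [Finset.mem_Ioo] at hj
          obtain ⟨m, hm⟩ : ∃ m : ℕ, (m : ℤ) = -j := ⟨(-j).toNat, by omega⟩
          have h1 : 1 ≤ m := by omega
          have h2 : m < i := by omega
          have e : u j = -u ((m:ℕ):ℤ) := by
            rw [show j = -((m:ℕ):ℤ) from by omega, huodd]
          have := hupos m h1 (by omega)
          have := hupos i hi1 hik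
          omega
        have b3 : ¬ (u (i:ℤ) < 0) := by have := hupos i hi1 hik; omega
        have b5 : ¬ (u (r:ℤ) < -u (i:ℤ)) := by omega
        have hdis : Disjoint ((Finset.Ioo (i:ℤ) (r:ℤ)).filter (fun j => u j < -u (i:ℤ)))
            ((Finset.Ioo (i:ℤ) (r:ℤ)).filter (fun j => u (r:ℤ) < u j)) := by
          rw [Finset.disjoint_left]
          intro j hj1 hj2
          rw [Finset.mem_filter] at hj1 hj2
          omega
        have b49 : ((Finset.Ioo (i:ℤ) (r:ℤ)).filter (fun j => u j < -u (i:ℤ))).card +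
            ((Finset.Ioo (i:ℤ) (r:ℤ)).filter (fun j => u (r:ℤ) < u j)).card ≤
            (Finset.Ioo (i:ℤ) (r:ℤ)).card := by
          rw [← Finset.card_union_of_disjoint hdis]
          exact Finset.card_le_card (Finset.union_subset (Finset.filter_subset _ _)
            (Finset.filter_subset _ _))
        have b7 : ((Finset.Ioo (0:ℤ) (i:ℤ)).filter (fun m => u (r:ℤ) < u m)).card ≤
            (Finset.Ioo (0:ℤ) (i:ℤ)).card := Finset.card_le_card (Finset.filter_subset _ _)
        -- t8 misses -(i-1)
        have hmem_e : -((i:ℤ) - 1) ∈ Finset.Ioo (-(i:ℤ)) (0:ℤ) := by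
          rw [Finset.mem_Ioo]
          have : (2:ℤ) ≤ (i:ℤ) := by exact_mod_cast hi2
          omega
        have hnot_e : -((i:ℤ) - 1) ∉
            (Finset.Ioo (-(i:ℤ)) (0:ℤ)).filter (fun m => u (r:ℤ) < u m) := by
          rw [Finset.mem_filter]
          rintro ⟨-, hcc⟩
          have e : u (-((i:ℤ) - 1)) = -u ((i - 1 : ℕ) : ℤ) := by
            rw [show -((i:ℤ)-1) = -(((i-1:ℕ)):ℤ) from by omega, huodd]
          omega
        have b8 : ((Finset.Ioo (-(i:ℤ)) (0:ℤ)).filter (fun m => u (r:ℤ) < u m)).card + 1 ≤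
            (Finset.Ioo (-(i:ℤ)) (0:ℤ)).card := by
          have hsub : (Finset.Ioo (-(i:ℤ)) (0:ℤ)).filter (fun m => u (r:ℤ) < u m) ⊆
              (Finset.Ioo (-(i:ℤ)) (0:ℤ)).erase (-((i:ℤ) - 1)) := by
            intro j hj
            rw [Finset.mem_erase]
            refine ⟨fun he => hnot_e (he ▸ hj), Finset.filter_subset _ _ hj⟩
          have hcard := Finset.card_le_card hsub
          rw [Finset.card_erase_of_mem hmem_e] at hcard
          have hpos : 0 < (Finset.Ioo (-(i:ℤ)) (0:ℤ)).card := Finset.card_pos.mpr ⟨_, hmem_e⟩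
          omega
        rw [if_neg b3, if_neg b5] at hB
        have b6 : (if u (r:ℤ) < 0 then (1:ℕ) else 0) ≤ 1 := by split_ifs <;> omega
        rw [b1, b2, Finset.card_empty] at hB
        omega
      -- (c2)
      have hc2 : i = 1 → 0 < -u (r : ℤ) := by
        intro hi
        by_contra hcon
        push_neg at hcon
        have hlt : 0 < u (r:ℤ) := by
          have hne := odd_ne_zero huodd (by omega : (r:ℤ) ≠ 0)
          omega
        have hiz : ((i:ℕ):ℤ) = 1 := by exact_mod_cast hi
        have hA0 : (Finset.Ioo (0:ℤ) (i:ℤ)).card = 0 := by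
          rw [hiz]
          simp [Int.card_Ioo]
        have hA0' : (Finset.Ioo (-(i:ℤ)) (0:ℤ)).card = 0 := by omega
        have b1 : ((Finset.Ioo (0:ℤ) (i:ℤ)).filter (fun m => u (i:ℤ) < u m)).card = 0 := by
          have := Finset.card_le_card (Finset.filter_subset
            (fun m => u (i:ℤ) < u m) (Finset.Ioo (0:ℤ) (i:ℤ)))
          omega
        have b2 : ((Finset.Ioo (-(i:ℤ)) (0:ℤ)).filter (fun m => u (i:ℤ) < u m)).card = 0 := by
          have := Finset.card_le_card (Finset.filter_subset
            (fun m => u (i:ℤ) < u m) (Finset.Ioo (-(i:ℤ)) (0:ℤ)))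
          omega
        have b7 : ((Finset.Ioo (0:ℤ) (i:ℤ)).filter (fun m => u (r:ℤ) < u m)).card = 0 := by
          have := Finset.card_le_card (Finset.filter_subset
            (fun m => u (r:ℤ) < u m) (Finset.Ioo (0:ℤ) (i:ℤ)))
          omega
        have b8 : ((Finset.Ioo (-(i:ℤ)) (0:ℤ)).filter (fun m => u (r:ℤ) < u m)).card = 0 := by
          have := Finset.card_le_card (Finset.filter_subset
            (fun m => u (r:ℤ) < u m) (Finset.Ioo (-(i:ℤ)) (0:ℤ)))
          omega
        have hposi := hupos i hi1 hik
        have b3 : ¬ (u (i:ℤ) < 0) := by omega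
        have b5 : ¬ (u (r:ℤ) < -u (i:ℤ)) := by omega
        have b6 : ¬ (u (r:ℤ) < 0) := by omega
        have hdis : Disjoint ((Finset.Ioo (i:ℤ) (r:ℤ)).filter (fun j => u j < -u (i:ℤ)))
            ((Finset.Ioo (i:ℤ) (r:ℤ)).filter (fun j => u (r:ℤ) < u j)) := by
          rw [Finset.disjoint_left]
          intro j hj1 hj2
          rw [Finset.mem_filter] at hj1 hj2
          omega
        have b49 : ((Finset.Ioo (i:ℤ) (r:ℤ)).filter (fun j => u j < -u (i:ℤ))).card +
            ((Finset.Ioo (i:ℤ) (r:ℤ)).filter (fun j => u (r:ℤ) < u j)).card ≤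
            (Finset.Ioo (i:ℤ) (r:ℤ)).card := by
          rw [← Finset.card_union_of_disjoint hdis]
          exact Finset.card_le_card (Finset.union_subset (Finset.filter_subset _ _)
            (Finset.filter_subset _ _))
        rw [if_neg b3, if_neg b5, if_neg b6, b1, b2, b7, b8] at hB
        omega
      -- (c3)
      have hc3 : i < k → -u (r : ℤ) < u ((i + 1 : ℕ) : ℤ) := by
        intro hik'
        by_contra hcon
        push_neg at hcon
        have hlt : u ((i + 1 : ℕ) : ℤ) < -u (r : ℤ) := by
          rcases lt_or_eq_of_le hcon with h' | h'
          · exact h'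
          · exact absurd h' (hne_r_neg (i+1))
        have hposi1 := hupos (i+1) (by omega) (by omega)
        have hii : u (i : ℤ) < u ((i+1 : ℕ) : ℤ) := humono i (i+1) hi1 (by omega) (by omega)
        have b7 : (Finset.Ioo (0:ℤ) (i:ℤ)).filter (fun m => u (r:ℤ) < u m) =
            Finset.Ioo (0:ℤ) (i:ℤ) := by
          apply Finset.filter_true_of_mem
          intro j hj
          rw [Finset.mem_Ioo] at hj
          obtain ⟨m, rfl⟩ : ∃ m : ℕ, (m : ℤ) = j := ⟨j.toNat, by omega⟩
          have h1 : 1 ≤ m := by exact_mod_cast hj.1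
          have := hupos m h1 (by omega)
          omega
        have b8 : (Finset.Ioo (-(i:ℤ)) (0:ℤ)).filter (fun m => u (r:ℤ) < u m) =
            Finset.Ioo (-(i:ℤ)) (0:ℤ) := by
          apply Finset.filter_true_of_mem
          intro j hj
          rw [Finset.mem_Ioo] at hj
          obtain ⟨m, hm⟩ : ∃ m : ℕ, (m : ℤ) = -j := ⟨(-j).toNat, by omega⟩
          have h1 : 1 ≤ m := by omega
          have h2 : m < i := by omega
          have e : u j = -u ((m:ℕ):ℤ) := by
            rw [show j = -((m:ℕ):ℤ) from by omega, huodd]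
          have := humono m (i+1) h1 (by omega) (by omega)
          omega
        have b49 : (Finset.Ioo (i:ℤ) (r:ℤ)).card ≤
            ((Finset.Ioo (i:ℤ) (r:ℤ)).filter (fun j => u j < -u (i:ℤ))).card +
            ((Finset.Ioo (i:ℤ) (r:ℤ)).filter (fun j => u (r:ℤ) < u j)).card := by
          have hsub : Finset.Ioo (i:ℤ) (r:ℤ) ⊆
              ((Finset.Ioo (i:ℤ) (r:ℤ)).filter (fun j => u j < -u (i:ℤ))) ∪
              ((Finset.Ioo (i:ℤ) (r:ℤ)).filter (fun j => u (r:ℤ) < u j)) := by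
            intro j hj
            rw [Finset.mem_union, Finset.mem_filter, Finset.mem_filter]
            by_cases hc : u j < -u (i:ℤ)
            · exact Or.inl ⟨hj, hc⟩
            · refine Or.inr ⟨hj, by omega⟩
          have h1 := Finset.card_le_card hsub
          have h2 := Finset.card_union_le
            ((Finset.Ioo (i:ℤ) (r:ℤ)).filter (fun j => u j < -u (i:ℤ)))
            ((Finset.Ioo (i:ℤ) (r:ℤ)).filter (fun j => u (r:ℤ) < u j))
          omega
        have b5 : u (r:ℤ) < -u (i:ℤ) := by omega
        have b6 : u (r:ℤ) < 0 := by omega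
        rw [if_pos b5, if_pos b6, b7, b8] at hB
        omega
      -- conclude via key_inc with c = -u r
      refine key_inc (u * tb i r) i (-u (r:ℤ)) hi1 hik ?_ ?_ ?_ ?_ ?_
      · intro m hm hmk hmi
        have hfix : tb i r (m : ℤ) = (m : ℤ) := by
          rw [tb_apply i r hi1 hr1 (by omega)]
          have c1 : (m : ℤ) ≠ (i : ℤ) := by exact_mod_cast (by omega : m ≠ i)
          have c2 : (m : ℤ) < (r : ℤ) := by exact_mod_cast (by omega : m < r)
          have c3 : (1 : ℤ) ≤ (m : ℤ) := by exact_mod_cast hm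
          have c4 : (1 : ℤ) ≤ (i : ℤ) := by exact_mod_cast hi1
          have c5 : (1 : ℤ) ≤ (r : ℤ) := by exact_mod_cast hr1
          split_ifs <;> omega
        simp only [Perm.mul_apply, hfix]
        exact hu_small m hm hmk
      · have hfix : tb i r (i : ℤ) = -(r : ℤ) := by
          rw [tb_apply i r hi1 hr1 (by omega)]
          simp
        simp only [Perm.mul_apply, hfix]
        exact huodd (r:ℤ)
      · intro hi2
        have := hc1 hi2
        rw [hu_small (i-1) (by omega) (by omega)] at this
        omega
      · intro hi
        exact hc2 hi
      · intro hik'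
        have := hc3 hik'
        rw [hu_small (i+1) (by omega) (by omega)] at this
        omega
    · -- trivial branch : i > k
      refine inc_triv (u * tb i r) ?_
      intro m hm hmk
      have hfix : tb i r (m : ℤ) = (m : ℤ) := by
        have c1 : (m : ℤ) < (i : ℤ) := by exact_mod_cast (by omega : m < i)
        have c2 : (m : ℤ) < (r : ℤ) := by exact_mod_cast (by omega : m < r)
        have c3 : (1 : ℤ) ≤ (m : ℤ) := by exact_mod_cast hm
        have c4 : (1 : ℤ) ≤ (i : ℤ) := by exact_mod_cast hi1
        have c5 : (1 : ℤ) ≤ (r : ℤ) := by exact_mod_cast hr1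
        rcases eq_or_ne i r with he | hne
        · subst he
          rw [tbaa_apply i hi1]
          split_ifs <;> omega
        · rw [tb_apply i r hi1 hr1 hne]
          split_ifs <;> omega
      simp only [Perm.mul_apply, hfix]
      exact hu_small m hm hmk


end Giambelli
end
end

section
/- In the nilCoxeter algebra of the type D Weyl group W̃_n, the elements D(t) = (1 + t u_{n-1})···(1 + t u_2)(1 + t u_1)(1 + t u_0)(1 + t u_2)···(1 + t u_{n-1}) satisfy D(s) D(t) = D(t) D(s) for commuting indeterminates s, t. -/
attribute [local instance] Classical.propDecidable

noncomputable section

namespace Giambelli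

/-- The defining relations of the nilCoxeter algebra of the type D Weyl group `W̃_n`. -/
inductive NCDRel (n : ℕ) : FreeAlgebra ℤ (Fin n) → FreeAlgebra ℤ (Fin n) → Prop
  | sq (i : Fin n) : NCDRel n (FreeAlgebra.ι ℤ i * FreeAlgebra.ι ℤ i) 0
  | comm01 (i j : Fin n) (h0 : i.val = 0) (h1 : j.val = 1) :
      NCDRel n (FreeAlgebra.ι ℤ i * FreeAlgebra.ι ℤ j) (FreeAlgebra.ι ℤ j * FreeAlgebra.ι ℤ i)
  | d02 (i j : Fin n) (h0 : i.val = 0) (h2 : j.val = 2) :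
      NCDRel n (FreeAlgebra.ι ℤ i * FreeAlgebra.ι ℤ j * FreeAlgebra.ι ℤ i)
               (FreeAlgebra.ι ℤ j * FreeAlgebra.ι ℤ i * FreeAlgebra.ι ℤ j)
  | braid (i j : Fin n) (h1 : 1 ≤ i.val) (h2 : j.val = i.val + 1) :
      NCDRel n (FreeAlgebra.ι ℤ i * FreeAlgebra.ι ℤ j * FreeAlgebra.ι ℤ i)
               (FreeAlgebra.ι ℤ j * FreeAlgebra.ι ℤ i * FreeAlgebra.ι ℤ j)
  | comm (i j : Fin n) (h : i.val + 1 < j.val) (hne : ¬ (i.val = 0 ∧ j.val = 2)) :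
      NCDRel n (FreeAlgebra.ι ℤ i * FreeAlgebra.ι ℤ j) (FreeAlgebra.ι ℤ j * FreeAlgebra.ι ℤ i)

/-- The nilCoxeter algebra of the type D Weyl group `W̃_n`. -/
abbrev NCD (n : ℕ) := RingQuot (NCDRel n)

/-- The generator `u_i` (and `0` for `i ≥ n`). -/
def NCDgen (n : ℕ) (i : ℕ) : NCD n :=
  if h : i < n then RingQuot.mkAlgHom ℤ (NCDRel n) (FreeAlgebra.ι ℤ (⟨i, h⟩ : Fin n)) else 0

/-- Polynomials in two central indeterminates `s`, `t` over the type D nilCoxeter algebra. -/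
abbrev NCDP (n : ℕ) := Polynomial (Polynomial (NCD n))

def NCDPu (n : ℕ) (i : ℕ) : NCDP n := Polynomial.C (Polynomial.C (NCDgen n i))

def tvarD (n : ℕ) : NCDP n := Polynomial.X

def svarD (n : ℕ) : NCDP n := Polynomial.C Polynomial.X

/-- `D(t) = (1+t u_{n-1})⋯(1+t u_2)(1+t u_1)(1+t u_0)(1+t u_2)⋯(1+t u_{n-1})`. -/
def Dop (n : ℕ) (t : NCDP n) : NCDP n :=
  (((List.range (n - 2)).map fun j => 1 + t * NCDPu n (n - 1 - j)).prod) *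
    (1 + t * NCDPu n 1) * (1 + t * NCDPu n 0) *
  (((List.range (n - 2)).map fun j => 1 + t * NCDPu n (j + 2)).prod)


variable {n : ℕ}

open Polynomial

/-! ### Relations among the generators -/

private lemma mk_rel {a b : FreeAlgebra ℤ (Fin n)} (h : NCDRel n a b) :
    RingQuot.mkAlgHom ℤ (NCDRel n) a = RingQuot.mkAlgHom ℤ (NCDRel n) b :=
  RingQuot.mkAlgHom_rel ℤ h

lemma NCDgen_sq (i : ℕ) : NCDgen n i * NCDgen n i = 0 := by
  unfold NCDgen
  split
  · rw [← map_mul, mk_rel (NCDRel.sq _), map_zero]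
  · rw [mul_zero]

lemma NCDgen_comm01 : NCDgen n 0 * NCDgen n 1 = NCDgen n 1 * NCDgen n 0 := by
  unfold NCDgen
  by_cases h1 : 1 < n
  · have h0 : 0 < n := by omega
    rw [dif_pos h0, dif_pos h1, ← map_mul, ← map_mul,
      mk_rel (NCDRel.comm01 ⟨0, h0⟩ ⟨1, h1⟩ rfl rfl)]
  · by_cases h0 : 0 < n
    · rw [dif_pos h0, dif_neg h1, mul_zero, zero_mul]
    · rw [dif_neg h0, mul_zero, zero_mul]

lemma NCDgen_braid02 :
    NCDgen n 0 * NCDgen n 2 * NCDgen n 0 = NCDgen n 2 * NCDgen n 0 * NCDgen n 2 := by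
  unfold NCDgen
  by_cases h2 : 2 < n
  · have h0 : 0 < n := by omega
    rw [dif_pos h0, dif_pos h2, ← map_mul, ← map_mul, ← map_mul, ← map_mul,
      mk_rel (NCDRel.d02 ⟨0, h0⟩ ⟨2, h2⟩ rfl rfl)]
  · by_cases h0 : 0 < n
    · simp [h2]
    · simp [h2]

lemma NCDgen_braid (i : ℕ) (hi : 1 ≤ i) :
    NCDgen n i * NCDgen n (i+1) * NCDgen n i
      = NCDgen n (i+1) * NCDgen n i * NCDgen n (i+1) := by
  unfold NCDgen
  by_cases h2 : i+1 < n
  · have h0 : i < n := by omega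
    rw [dif_pos h0, dif_pos h2, ← map_mul, ← map_mul, ← map_mul, ← map_mul,
      mk_rel (NCDRel.braid ⟨i, h0⟩ ⟨i+1, h2⟩ hi rfl)]
  · by_cases h0 : i < n
    · simp [h2]
    · simp [h2]

lemma NCDgen_comm (i j : ℕ) (hij : i + 1 < j) (hne : ¬ (i = 0 ∧ j = 2)) :
    NCDgen n i * NCDgen n j = NCDgen n j * NCDgen n i := by
  unfold NCDgen
  by_cases hj : j < n
  · have hi : i < n := by omega
    rw [dif_pos hi, dif_pos hj, ← map_mul, ← map_mul,
      mk_rel (NCDRel.comm ⟨i, hi⟩ ⟨j, hj⟩ hij hne)]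
  · by_cases hi : i < n
    · rw [dif_pos hi, dif_neg hj, mul_zero, zero_mul]
    · rw [dif_neg hi, zero_mul, mul_zero]


/-! ### Generators and central elements in `NCDP` -/

local notation "uu" => NCDPu n

lemma uu_sq (i : ℕ) : uu i * uu i = 0 := by
  unfold NCDPu
  rw [← C_mul, ← C_mul, NCDgen_sq, C_0, C_0]

lemma uu_comm01 : uu 0 * uu 1 = uu 1 * uu 0 := by
  unfold NCDPu
  rw [← C_mul, ← C_mul, ← C_mul, ← C_mul, NCDgen_comm01]

lemma uu_braid02 : uu 0 * uu 2 * uu 0 = uu 2 * uu 0 * uu 2 := by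
  unfold NCDPu
  simp only [← C_mul]
  rw [NCDgen_braid02]

lemma uu_braid (i : ℕ) (hi : 1 ≤ i) :
    uu i * uu (i+1) * uu i = uu (i+1) * uu i * uu (i+1) := by
  unfold NCDPu
  simp only [← C_mul]
  rw [NCDgen_braid i hi]

lemma uu_comm (i j : ℕ) (hij : i + 1 < j) (hne : ¬ (i = 0 ∧ j = 2)) :
    uu i * uu j = uu j * uu i := by
  unfold NCDPu
  simp only [← C_mul]
  rw [NCDgen_comm i j hij hne]

/-- Elements commuting with everything. -/
def IsCtr (z : NCDP n) : Prop := ∀ p : NCDP n, Commute z p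

lemma isCtr_tvar : IsCtr (tvarD n) := fun _ => Polynomial.X_mul

lemma isCtr_svar : IsCtr (svarD n) := by
  intro p
  induction p using Polynomial.induction_on with
  | C a =>
    show (C X : NCDP n) * C a = C a * C X
    rw [← C_mul, ← C_mul, Polynomial.X_mul]
  | add p q hp hq => exact hp.add_right hq
  | monomial m a hm =>
    have h1 : Commute (svarD n) (C a * X ^ m) := hm
    have h2 : Commute (svarD n) (X : NCDP n) := (Polynomial.X_mul).symm
    have := h1.mul_right h2
    simpa [mul_assoc, pow_succ] using this

lemma IsCtr.add {a b : NCDP n} (ha : IsCtr a) (hb : IsCtr b) : IsCtr (a + b) :=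
  fun p => (ha p).add_left (hb p)

/-- Negation, done by hand since `Ring (NCDP n)` does not synthesize. -/
def negP (a : NCDP n) : NCDP n := algebraMap ℤ (NCDP n) (-1) * a

lemma negP_add_self (a : NCDP n) : negP a + a = 0 := by
  have h : negP a + a = (algebraMap ℤ (NCDP n) (-1) + algebraMap ℤ (NCDP n) 1) * a := by
    rw [add_mul, map_one, one_mul]; rfl
  rw [h, ← map_add]
  simp

lemma IsCtr.negP {a : NCDP n} (ha : IsCtr a) : IsCtr (Giambelli.negP a) :=
  fun p => Commute.mul_left (Algebra.commutes (-1 : ℤ) p) (ha p)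

/-! ### `h i x = 1 + x u_i` and its identities -/

lemma swl {x : NCDP n} (hx : IsCtr x) (p q : NCDP n) :
    p * (x * q) = x * (p * q) := by
  rw [← mul_assoc, ← (hx p).eq, mul_assoc]

lemma swu {x : NCDP n} (hx : IsCtr x) (i : ℕ) (q : NCDP n) :
    NCDPu n i * (x * q) = x * (NCDPu n i * q) := swl hx _ _

/-- `h i x = 1 + x * u i`. -/
def hh (i : ℕ) (x : NCDP n) : NCDP n := 1 + x * NCDPu n i

lemma hh_mul {x y z : NCDP n} (hx : IsCtr x) (hy : IsCtr y) (i : ℕ)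
    (hz : x + y = z) : hh i x * hh i y = hh i z := by
  subst hz
  unfold hh
  simp only [mul_add, add_mul, mul_one, one_mul, mul_assoc]
  simp only [swu hx, swu hy, uu_sq, mul_zero, add_zero, zero_mul, zero_add]
  abel

lemma hh_comm {x y : NCDP n} (hx : IsCtr x) (hy : IsCtr y) {i j : ℕ}
    (hij : NCDPu n i * NCDPu n j = NCDPu n j * NCDPu n i) :
    hh i x * hh j y = hh j y * hh i x := by
  unfold hh
  simp only [mul_add, add_mul, mul_one, one_mul, mul_assoc]
  simp only [swu hx, swu hy, swl hx y, hij, uu_sq, mul_zero, add_zero, zero_mul, zero_add]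
  abel

lemma hh_yb {x y z : NCDP n} (hx : IsCtr x) (hy : IsCtr y) {i j : ℕ}
    (hbr : NCDPu n i * NCDPu n j * NCDPu n i = NCDPu n j * NCDPu n i * NCDPu n j)
    (hz : x + y = z) :
    hh i x * (hh j z * hh i y) = hh j y * (hh i z * hh j x) := by
  have hbr' : NCDPu n i * (NCDPu n j * NCDPu n i)
      = NCDPu n j * (NCDPu n i * NCDPu n j) := by
    simpa [mul_assoc] using hbr
  subst hz
  unfold hh
  simp only [mul_add, add_mul, mul_one, one_mul, mul_assoc]
  simp only [swu hx, swu hy, swl hx y, hbr', uu_sq, mul_zero, add_zero, zero_mul, zero_add]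
  abel

/-! ### Tailed rewriting forms -/

lemma hh_mul' {x y z : NCDP n} (hx : IsCtr x) (hy : IsCtr y) (i : ℕ)
    (hz : x + y = z) (r : NCDP n) : hh i x * (hh i y * r) = hh i z * r := by
  rw [← mul_assoc, hh_mul hx hy i hz]

lemma hh_comm' {x y : NCDP n} (hx : IsCtr x) (hy : IsCtr y) {i j : ℕ}
    (hij : NCDPu n i * NCDPu n j = NCDPu n j * NCDPu n i) (r : NCDP n) :
    hh i x * (hh j y * r) = hh j y * (hh i x * r) := by
  rw [← mul_assoc, hh_comm hx hy hij, mul_assoc]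

lemma hh_yb' {x y z : NCDP n} (hx : IsCtr x) (hy : IsCtr y) {i j : ℕ}
    (hbr : NCDPu n i * NCDPu n j * NCDPu n i = NCDPu n j * NCDPu n i * NCDPu n j)
    (hz : x + y = z) (r : NCDP n) :
    hh i x * (hh j z * (hh i y * r)) = hh j y * (hh i z * (hh j x * r)) := by
  simpa [mul_assoc] using congrArg (· * r) (hh_yb hx hy hbr hz)

lemma comm_move {A B : NCDP n} (h : Commute A B) (r : NCDP n) :
    A * (B * r) = B * (A * r) := by
  rw [← mul_assoc, h.eq, mul_assoc]

/-! ### The palindromic products `F` -/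

/-- `F m x = h_{m+1}(x) ⋯ h_2(x) h_1(x) h_0(x) h_2(x) ⋯ h_{m+1}(x)`. -/
def FF : ℕ → NCDP n → NCDP n
  | 0, x => hh 1 x * hh 0 x
  | m+1, x => hh (m+2) x * (FF m x * hh (m+2) x)

lemma FF_zero' (x r : NCDP n) : FF 0 x * r = hh 1 x * (hh 0 x * r) := by
  simp [FF, mul_assoc]

lemma FF_succ' (m : ℕ) (x r : NCDP n) :
    FF (m+1) x * r = hh (m+2) x * (FF m x * (hh (m+2) x * r)) := by
  simp [FF, mul_assoc]

lemma hh_comm_FF {z x : NCDP n} (hz : IsCtr z) (hx : IsCtr x) :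
    ∀ (m j : ℕ), m + 2 < j → Commute (hh j z) (FF m x)
  | 0, j, hj => by
    have c1 : Commute (hh j z) (hh 1 x) :=
      hh_comm hz hx ((uu_comm 1 j (by omega) (by omega)).symm)
    have c0 : Commute (hh j z) (hh 0 x) :=
      hh_comm hz hx ((uu_comm 0 j (by omega) (by omega)).symm)
    exact c1.mul_right c0
  | m+1, j, hj => by
    have cg : Commute (hh j z) (hh (m+2) x) :=
      hh_comm hz hx ((uu_comm (m+2) j (by omega) (by omega)).symm)
    exact cg.mul_right ((hh_comm_FF hz hx m j (by omega)).mul_right cg)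

/-! ### The key exchange identity -/

lemma exch : ∀ (m : ℕ) {x y d : NCDP n}, IsCtr x → IsCtr y → IsCtr d →
    d + y = x → ∀ r : NCDP n,
    hh (m+2) d * (FF m x * (hh (m+2) (x+y) * (FF m y * r)))
      = FF m y * (hh (m+2) (x+y) * (FF m x * (hh (m+2) d * r)))
  | 0, x, y, d, hx, hy, hd, hdy, r => by
    have br12 := uu_braid (n := n) 1 (by omega)
    have br02 := uu_braid02 (n := n)
    have c01 := uu_comm01 (n := n)
    calc hh 2 d * (FF 0 x * (hh 2 (x+y) * (FF 0 y * r)))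
        = hh 2 d * (hh 1 x * (hh 0 x * (hh 2 (x+y) * (hh 1 y * (hh 0 y * r))))) := by
          rw [FF_zero', FF_zero']
      _ = hh 2 d * (hh 0 x * (hh 1 x * (hh 2 (x+y) * (hh 1 y * (hh 0 y * r))))) := by
          rw [hh_comm' hx hx c01.symm]
      _ = hh 2 d * (hh 0 x * (hh 2 y * (hh 1 (x+y) * (hh 2 x * (hh 0 y * r))))) := by
          rw [hh_yb' hx hy br12 rfl]
      _ = hh 0 y * (hh 2 x * (hh 0 d * (hh 1 (x+y) * (hh 2 x * (hh 0 y * r))))) := by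
          rw [hh_yb' hd hy br02.symm hdy]
      _ = hh 0 y * (hh 2 x * (hh 1 (x+y) * (hh 0 d * (hh 2 x * (hh 0 y * r))))) := by
          rw [hh_comm' hd (hx.add hy) c01]
      _ = hh 0 y * (hh 2 x * (hh 1 (x+y) * (hh 2 y * (hh 0 x * (hh 2 d * r))))) := by
          rw [hh_yb' hd hy br02 hdy]
      _ = hh 0 y * (hh 1 y * (hh 2 (x+y) * (hh 1 x * (hh 0 x * (hh 2 d * r))))) := by
          rw [hh_yb' hx hy br12.symm rfl]
      _ = hh 1 y * (hh 0 y * (hh 2 (x+y) * (hh 1 x * (hh 0 x * (hh 2 d * r))))) := by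
          rw [hh_comm' hy hy c01]
      _ = FF 0 y * (hh 2 (x+y) * (FF 0 x * (hh 2 d * r))) := by
          rw [FF_zero', FF_zero']
  | m+1, x, y, d, hx, hy, hd, hdy, r => by
    have brg := uu_braid (n := n) (m+2) (by omega)
    have cyx : Commute (hh (m+3) y) (FF m x) := hh_comm_FF hy hx m (m+3) (by omega)
    have cxy : Commute (hh (m+3) x) (FF m y) := hh_comm_FF hx hy m (m+3) (by omega)
    have cdx : Commute (hh (m+3) d) (FF m x) := hh_comm_FF hd hx m (m+3) (by omega)
    simp only [show m+1+2 = m+3 from rfl]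
    calc hh (m+3) d * (FF (m+1) x * (hh (m+3) (x+y) * (FF (m+1) y * r)))
        = hh (m+3) d * (hh (m+2) x * (FF m x * (hh (m+2) x * (hh (m+3) (x+y) *
            (hh (m+2) y * (FF m y * (hh (m+2) y * r))))))) := by
          rw [FF_succ', FF_succ']
      _ = hh (m+3) d * (hh (m+2) x * (FF m x * (hh (m+3) y * (hh (m+2) (x+y) *
            (hh (m+3) x * (FF m y * (hh (m+2) y * r))))))) := by
          rw [hh_yb' hx hy brg rfl]
      _ = hh (m+3) d * (hh (m+2) x * (hh (m+3) y * (FF m x * (hh (m+2) (x+y) *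
            (hh (m+3) x * (FF m y * (hh (m+2) y * r))))))) := by
          rw [comm_move cyx.symm]
      _ = hh (m+3) d * (hh (m+2) x * (hh (m+3) y * (FF m x * (hh (m+2) (x+y) *
            (FF m y * (hh (m+3) x * (hh (m+2) y * r))))))) := by
          rw [comm_move cxy]
      _ = hh (m+2) y * (hh (m+3) x * (hh (m+2) d * (FF m x * (hh (m+2) (x+y) *
            (FF m y * (hh (m+3) x * (hh (m+2) y * r))))))) := by
          rw [hh_yb' hd hy brg.symm hdy]
      _ = hh (m+2) y * (hh (m+3) x * (FF m y * (hh (m+2) (x+y) *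
            (FF m x * (hh (m+2) d * (hh (m+3) x * (hh (m+2) y * r))))))) := by
          rw [exch m hx hy hd hdy]
      _ = hh (m+2) y * (FF m y * (hh (m+3) x * (hh (m+2) (x+y) *
            (FF m x * (hh (m+2) d * (hh (m+3) x * (hh (m+2) y * r))))))) := by
          rw [comm_move cxy]
      _ = hh (m+2) y * (FF m y * (hh (m+3) x * (hh (m+2) (x+y) *
            (FF m x * (hh (m+3) y * (hh (m+2) x * (hh (m+3) d * r))))))) := by
          rw [hh_yb' hd hy brg hdy]
      _ = hh (m+2) y * (FF m y * (hh (m+3) x * (hh (m+2) (x+y) *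
            (hh (m+3) y * (FF m x * (hh (m+2) x * (hh (m+3) d * r))))))) := by
          rw [comm_move cyx.symm]
      _ = hh (m+2) y * (FF m y * (hh (m+2) y * (hh (m+3) (x+y) *
            (hh (m+2) x * (FF m x * (hh (m+2) x * (hh (m+3) d * r))))))) := by
          rw [hh_yb' hx hy brg.symm rfl]
      _ = FF (m+1) y * (hh (m+3) (x+y) * (FF (m+1) x * (hh (m+3) d * r))) := by
          rw [FF_succ', FF_succ']

/-! ### Commutation of the `F`'s -/

lemma hh_commute_same {x y : NCDP n} (hx : IsCtr x) (hy : IsCtr y) (i : ℕ) :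
    Commute (hh i x) (hh i y) := by
  show hh i x * hh i y = hh i y * hh i x
  rw [hh_mul hx hy i rfl, hh_mul hy hx i (add_comm y x)]

lemma FF_comm' (m : ℕ) {x y : NCDP n} (hx : IsCtr x) (hy : IsCtr y)
    (r : NCDP n) : FF m x * (FF m y * r) = FF m y * (FF m x * r) := by
  cases m with
  | zero =>
    have c1 : Commute (hh 1 x) (hh 1 y) := hh_commute_same hx hy 1
    have c0 : Commute (hh 0 x) (hh 0 y) := hh_commute_same hx hy 0
    have c01 : Commute (hh 0 x) (hh 1 y) := hh_comm hx hy (uu_comm01 (n := n))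
    have c10 : Commute (hh 1 x) (hh 0 y) := hh_comm hx hy (uu_comm01 (n := n)).symm
    have : Commute (FF 0 x) (FF 0 y) :=
      ((c1.mul_right c10).mul_left (c01.mul_right c0) : Commute (FF 0 x) (FF 0 y))
    rw [comm_move this]
  | succ m =>
    have hdC : IsCtr (x + negP y) := hx.add hy.negP
    have hyd : y + (x + negP y) = x := by
      rw [add_comm y, add_assoc, negP_add_self y, add_zero]
    have hdy : (x + negP y) + y = x := by
      rw [add_assoc, negP_add_self y, add_zero]
    calc FF (m+1) x * (FF (m+1) y * r)
        = hh (m+2) x * (FF m x * (hh (m+2) x * (hh (m+2) y *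
            (FF m y * (hh (m+2) y * r))))) := by rw [FF_succ', FF_succ']
      _ = hh (m+2) x * (FF m x * (hh (m+2) (x+y) * (FF m y * (hh (m+2) y * r)))) := by
          rw [hh_mul' hx hy (m+2) rfl]
      _ = hh (m+2) y * (hh (m+2) (x + negP y) * (FF m x * (hh (m+2) (x+y) *
            (FF m y * (hh (m+2) y * r))))) := by
          conv_lhs => rw [← hh_mul' hy hdC (m+2) hyd]
      _ = hh (m+2) y * (FF m y * (hh (m+2) (x+y) * (FF m x *
            (hh (m+2) (x + negP y) * (hh (m+2) y * r))))) := by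
          rw [exch m hx hy hdC hdy]
      _ = hh (m+2) y * (FF m y * (hh (m+2) (x+y) * (FF m x * (hh (m+2) x * r)))) := by
          rw [hh_mul' hdC hy (m+2) hdy]
      _ = hh (m+2) y * (FF m y * (hh (m+2) y * (hh (m+2) x * (FF m x *
            (hh (m+2) x * r))))) := by
          conv_lhs => rw [← hh_mul' hy hx (m+2) (add_comm y x)]
      _ = FF (m+1) y * (FF (m+1) x * r) := by rw [FF_succ', FF_succ']

lemma FF_comm (m : ℕ) {x y : NCDP n} (hx : IsCtr x) (hy : IsCtr y) :
    FF m x * FF m y = FF m y * FF m x := by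
  have := FF_comm' m hx hy 1
  simpa using this

/-! ### Identification of `Dop` with `F (n-2)` -/

lemma FF_prod (m : ℕ) (t : NCDP n) :
    (((List.range m).map fun j => hh (m + 1 - j) t).prod) *
      hh 1 t * hh 0 t *
    (((List.range m).map fun j => hh (j + 2) t).prod) = FF m t := by
  induction m with
  | zero => simp [FF]
  | succ m ih =>
    have hdesc : ((List.range (m+1)).map fun j => hh (m + 1 + 1 - j) t).prod
        = hh (m+2) t * ((List.range m).map fun j => hh (m + 1 - j) t).prod := by
      rw [List.range_succ_eq_map, List.map_cons, List.prod_cons, List.map_map]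
      refine congrArg₂ (· * ·) rfl ?_
      apply congrArg List.prod
      apply List.map_congr_left
      intro j hj
      simp [Function.comp, Nat.succ_sub_succ]
    have hasc : ((List.range (m+1)).map fun j => hh (j + 2) t).prod
        = ((List.range m).map fun j => hh (j + 2) t).prod * hh (m+2) t := by
      rw [List.range_succ, List.map_append, List.prod_append]
      simp
    rw [hdesc, hasc, show FF (m+1) t = hh (m+2) t * (FF m t * hh (m+2) t) from rfl, ← ih]
    simp [mul_assoc]

lemma Dop_eq_FF (t : NCDP n) : Dop n t = FF (n - 2) t := by
  have hmap : ((List.range (n-2)).map fun j => 1 + t * NCDPu n (n - 1 - j))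
      = (List.range (n-2)).map fun j => hh (n - 2 + 1 - j) t := by
    apply List.map_congr_left
    intro j hj
    have hj' : j < n - 2 := List.mem_range.mp hj
    have : n - 1 - j = n - 2 + 1 - j := by omega
    rw [this]
    rfl
  unfold Dop
  rw [hmap]
  exact FF_prod (n-2) t

/-!
STATEMENT 17: In the nilCoxeter algebra of the type D Weyl group `W̃_n`, the
elements `D(t)` satisfy `D(s) D(t) = D(t) D(s)` for commuting indeterminates `s`, `t`.
-/

theorem Dop_commute (n : ℕ) :
    Dop n (svarD n) * Dop n (tvarD n) = Dop n (tvarD n) * Dop n (svarD n) := by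
  rw [Dop_eq_FF, Dop_eq_FF]
  exact FF_comm (n - 2) isCtr_svar isCtr_tvar

end Giambelli
end
end
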